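/- arXiv:2405.11947 — 8 statements merged into one kernel-verified Lean document; each statement's English description precedes it below -/
import Mathlib

section
/- Let n ≥ 2 and let α, β, γ, δ be real numbers with γ ≠ δ. Then the limit of (P_α(x₁,...,xₙ) - P_β(x₁,...,xₙ)) / (P_γ(x₁,...,xₙ) - P_δ(x₁,...,xₙ)) as (x₁,...,xₙ) → (x,x,...,x) equals (α-β)/(γ-δ), for any fixed x > 0. -/
open Filter Real Topology

noncomputable def ub {n : ℕ} (v : Fin n → ℝ) : ℝ := (∑ i, Real.log (v i)) / n
noncomputable def dd {n : ℕ} (v : Fin n → ℝ) (i : Fin n) : ℝ := Real.log (v i) - ub v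
noncomputable def Vr {n : ℕ} (v : Fin n → ℝ) : ℝ := (∑ i, dd v i ^ 2) / n
noncomputable def Dd {n : ℕ} (v : Fin n → ℝ) : ℝ := ∑ i, |dd v i|
noncomputable def Gg {n : ℕ} (s : ℝ) (v : Fin n → ℝ) : ℝ :=
  if s = 0 then 0 else Real.log ((∑ i, Real.exp (s * dd v i)) / n) / s

/-- Power mean of exponent `α` (geometric mean when `α = 0`). -/
noncomputable def pmean {n : ℕ} (α : ℝ) (x : Fin n → ℝ) : ℝ :=
  if α = 0 then (∏ i, x i) ^ ((1 : ℝ) / n)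
  else ((∑ i, x i ^ α) / n) ^ (1 / α)

lemma sum_dd {n : ℕ} (hn : 0 < n) (v : Fin n → ℝ) : ∑ i, dd v i = 0 := by
  have hn' : (n:ℝ) ≠ 0 := Nat.cast_ne_zero.mpr hn.ne'
  simp only [dd, Finset.sum_sub_distrib, Finset.sum_const, Finset.card_univ, Fintype.card_fin,
    nsmul_eq_mul, ub]
  field_simp
  ring

lemma pmean_eq {n : ℕ} (hn : 0 < n) {v : Fin n → ℝ} (hv : ∀ i, 0 < v i) (s : ℝ) :
    pmean s v = Real.exp (ub v + Gg s v) := by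
  have hn' : (0:ℝ) < n := by exact_mod_cast hn
  rcases eq_or_ne s 0 with rfl | hs
  · simp only [pmean, Gg, if_pos rfl, ↓reduceIte, add_zero]
    have hp : 0 < ∏ i, v i := Finset.prod_pos (fun i _ => hv i)
    rw [Real.rpow_def_of_pos hp, Real.log_prod (fun i _ => (hv i).ne')]
    unfold ub
    congr 1
    field_simp
  · simp only [pmean, Gg, if_neg hs]
    have key : ∀ i : Fin n, v i ^ s = Real.exp (s * ub v) * Real.exp (s * dd v i) := by
      intro i
      rw [Real.rpow_def_of_pos (hv i), ← Real.exp_add]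
      congr 1
      unfold dd; ring
    rw [Finset.sum_congr rfl (fun i _ => key i), ← Finset.mul_sum]
    have hA : 0 < (∑ i, Real.exp (s * dd v i)) / n := by
      apply div_pos _ hn'
      have : Nonempty (Fin n) := Fin.pos_iff_nonempty.mp hn
      apply Finset.sum_pos (fun i _ => Real.exp_pos _)
      exact Finset.univ_nonempty
    have hre : Real.exp (s * ub v) * (∑ i, Real.exp (s * dd v i)) / n
        = Real.exp (s * ub v) * ((∑ i, Real.exp (s * dd v i)) / n) := by ring
    rw [hre, Real.rpow_def_of_pos (by positivity), Real.log_mul (Real.exp_ne_zero _) hA.ne',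
      Real.log_exp]
    congr 1
    field_simp

lemma Vr_pos {n : ℕ} (hn : 0 < n) {v : Fin n → ℝ} (hv : ∀ i, 0 < v i)
    (hne : ¬ (∀ i j, v i = v j)) : 0 < Vr v := by
  have hn' : (0:ℝ) < n := by exact_mod_cast hn
  have h0 : 0 ≤ Vr v := by
    apply div_nonneg _ hn'.le
    exact Finset.sum_nonneg (fun i _ => sq_nonneg _)
  rcases h0.lt_or_eq with h | h
  · exact h
  exfalso
  apply hne
  have hz : ∀ i : Fin n, dd v i = 0 := by
    have hsum : ∑ i, dd v i ^ 2 = 0 := by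
      have := h.symm
      unfold Vr at this
      field_simp at this
      simpa using this
    intro i
    have := (Finset.sum_eq_zero_iff_of_nonneg (fun i _ => sq_nonneg (dd v i))).mp hsum i
      (Finset.mem_univ i)
    exact pow_eq_zero_iff (by norm_num) |>.mp this
  intro i j
  have hi : Real.log (v i) = ub v := by have := hz i; unfold dd at this; linarith
  have hj : Real.log (v j) = ub v := by have := hz j; unfold dd at this; linarith
  rw [← Real.exp_log (hv i), ← Real.exp_log (hv j), hi, hj]

theorem stmt_0' : True := trivial

lemma est2 {s D V A : ℝ} (hs : s ≠ 0) (hDnn : 0 ≤ D) (hV : 0 < V)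
    (hVD : V ≤ D * D) (h2 : D ≤ 1) (h3 : (s^2/2 + |s|^3) * D ≤ 1/2)
    (step2 : |A - (1 + s^2 * V / 2)| ≤ |s|^3 * D * V) :
    |Real.log A / s / V - s/2| ≤ ((|s|^3 + 2*(s^2/2+|s|^3)^2) / |s|) * D := by
  have hVnn : 0 ≤ V := hV.le
  have hsnn : (0:ℝ) ≤ s^2/2 + |s|^3 := by positivity
  have hs3 : (0:ℝ) ≤ |s|^3 := by positivity
  set y := A - 1 with hy
  have hybound : |y| ≤ (s^2/2 + |s|^3) * V := by
    have hh : y = (A - (1 + s^2*V/2)) + s^2*V/2 := by rw [hy]; ring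
    rw [hh]
    calc |(A - (1 + s^2*V/2)) + s^2*V/2| ≤ |A - (1 + s^2*V/2)| + |s^2*V/2| := abs_add_le _ _
      _ ≤ |s|^3 * D * V + s^2*V/2 := by
          apply add_le_add step2
          rw [abs_of_nonneg (by positivity)]
      _ ≤ (s^2/2 + |s|^3) * V := by nlinarith [mul_nonneg hs3 hVnn]
  have hyhalf : |y| ≤ 1/2 := by
    calc |y| ≤ (s^2/2 + |s|^3) * V := hybound
      _ ≤ (s^2/2 + |s|^3) * (D * D) := mul_le_mul_of_nonneg_left hVD hsnn
      _ = ((s^2/2 + |s|^3) * D) * D := by ring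
      _ ≤ (1/2) * 1 := mul_le_mul h3 h2 hDnn (by norm_num)
      _ = 1/2 := by norm_num
  have hlog1 : |Real.log A - y| ≤ 2 * y^2 := by
    have hlt : |(-y)| < 1 := by rw [abs_neg]; linarith
    have hb := Real.abs_log_sub_add_sum_range_le hlt 1
    have h1y : 1 - (-y) = A := by rw [hy]; ring
    simp only [Finset.sum_range_one, pow_one, h1y, Nat.cast_zero, zero_add, div_one,
      abs_neg] at hb
    have hre : |Real.log A - y| = |(-y) + Real.log A| := by
      congr 1; ring
    rw [hre]
    calc |(-y) + Real.log A| ≤ |y|^2 / (1 - |y|) := hb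
      _ ≤ 2 * y^2 := by
          have h12 : (1:ℝ)/2 ≤ 1 - |y| := by linarith
          rw [sq_abs] at *
          calc y^2 / (1 - |y|) ≤ y^2 / (1/2) :=
                div_le_div_of_nonneg_left (sq_nonneg _) (by norm_num) h12
            _ = 2 * y^2 := by ring
  have hlog : |Real.log A - s^2*V/2| ≤ (|s|^3 + 2*(s^2/2+|s|^3)^2) * D * V := by
    have h2y : 2 * y^2 ≤ 2*(s^2/2+|s|^3)^2 * D * V := by
      have hy2 : y^2 ≤ ((s^2/2 + |s|^3) * V)^2 := by
        rw [← sq_abs y]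
        exact pow_le_pow_left₀ (abs_nonneg _) hybound 2
      have hVD' : V ≤ D := by nlinarith
      have hVV : V * V ≤ D * V := by nlinarith
      nlinarith [sq_nonneg (s^2/2 + |s|^3), mul_nonneg (mul_nonneg hsnn hsnn) (mul_nonneg hDnn hVnn)]
    have hys : |y - s^2*V/2| ≤ |s|^3 * D * V := by
      have hh : y - s^2*V/2 = A - (1 + s^2 * V / 2) := by rw [hy]; ring
      rw [hh]; exact step2
    calc |Real.log A - s^2*V/2| ≤ |Real.log A - y| + |y - s^2*V/2| := abs_sub_le _ _ _
      _ ≤ 2 * y^2 + |s|^3 * D * V := add_le_add hlog1 hys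
      _ ≤ (|s|^3 + 2*(s^2/2+|s|^3)^2) * D * V := by linarith
  have hkey : Real.log A / s / V - s/2 = (Real.log A - s^2*V/2) / (s*V) := by
    field_simp
  rw [hkey, abs_div, abs_mul, abs_of_pos hV]
  rw [div_le_iff₀ (by positivity)]
  calc |Real.log A - s^2*V/2| ≤ (|s|^3 + 2*(s^2/2+|s|^3)^2) * D * V := hlog
    _ = (|s|^3 + 2*(s^2/2+|s|^3)^2) / |s| * D * (|s| * V) := by
        have hsne : |s| ≠ 0 := abs_ne_zero.mpr hs
        field_simp

lemma est {n : ℕ} (hn : 0 < n) {s : ℝ} (hs : s ≠ 0) (v : Fin n → ℝ)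
    (hV : 0 < Vr v)
    (h1 : |s| * Dd v ≤ 1) (h2 : Dd v ≤ 1) (h3 : (s^2/2 + |s|^3) * Dd v ≤ 1/2) :
    |Gg s v / Vr v - s/2| ≤ ((|s|^3 + 2*(s^2/2+|s|^3)^2) / |s|) * Dd v := by
  have hn' : (0:ℝ) < n := by exact_mod_cast hn
  have hDnn : 0 ≤ Dd v := Finset.sum_nonneg (fun i _ => abs_nonneg _)
  have hdD : ∀ i, |dd v i| ≤ Dd v := fun i =>
    Finset.single_le_sum (fun j _ => abs_nonneg (dd v j)) (Finset.mem_univ i)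
  have hsumd : ∑ i, dd v i = 0 := sum_dd hn v
  have hsumsq : ∑ i, dd v i ^ 2 = n * Vr v := by
    unfold Vr; field_simp
  -- step 1: pointwise Taylor bound for exp
  have step1 : ∀ i, |Real.exp (s * dd v i) - (1 + s * dd v i + (s * dd v i)^2/2)|
      ≤ |s|^3 * Dd v * (dd v i)^2 := by
    intro i
    have hx : |s * dd v i| ≤ 1 := by
      rw [abs_mul]
      calc |s| * |dd v i| ≤ |s| * Dd v :=
            mul_le_mul_of_nonneg_left (hdD i) (abs_nonneg s)
        _ ≤ 1 := h1
    have hb := Real.exp_bound hx (n := 3) (by norm_num)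
    have hform : ∑ m ∈ Finset.range 3, (s * dd v i) ^ m / m.factorial
        = 1 + s * dd v i + (s * dd v i)^2/2 := by
      norm_num [Finset.sum_range_succ, Nat.factorial]
    rw [hform] at hb
    calc |Real.exp (s * dd v i) - (1 + s * dd v i + (s * dd v i)^2/2)|
        ≤ |s * dd v i| ^ 3 * ((3:ℕ).succ / ((3:ℕ).factorial * 3)) := hb
      _ ≤ |s * dd v i| ^ 3 * 1 := by
          apply mul_le_mul_of_nonneg_left _ (pow_nonneg (abs_nonneg _) 3)
          norm_num [Nat.factorial]
      _ = |s * dd v i| ^ 3 := mul_one _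
      _ ≤ |s|^3 * Dd v * (dd v i)^2 := by
          rw [abs_mul, mul_pow]
          have hdd : |dd v i|^3 ≤ Dd v * (dd v i)^2 := by
            have he : |dd v i|^3 = |dd v i| * (dd v i)^2 := by
              rw [pow_succ' (|dd v i|) 2, sq_abs]
            rw [he]
            exact mul_le_mul_of_nonneg_right (hdD i) (sq_nonneg _)
          calc |s|^3 * |dd v i|^3 ≤ |s|^3 * (Dd v * (dd v i)^2) :=
                mul_le_mul_of_nonneg_left hdd (pow_nonneg (abs_nonneg s) 3)
            _ = |s|^3 * Dd v * (dd v i)^2 := by ring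
  -- step 2
  have step2 : |(∑ i, Real.exp (s * dd v i)) / n - (1 + s^2 * Vr v / 2)|
      ≤ |s|^3 * Dd v * Vr v := by
    have hAexp : (∑ i, Real.exp (s * dd v i)) / n - (1 + s^2 * Vr v / 2)
        = (∑ i, (Real.exp (s * dd v i) - (1 + s * dd v i + (s * dd v i)^2/2))) / n := by
      rw [Finset.sum_sub_distrib]
      have hc : ∑ i : Fin n, (1 + s * dd v i + (s * dd v i)^2/2)
          = n + s * (∑ i, dd v i) + s^2 * (∑ i, dd v i ^2) / 2 := by
        rw [Finset.sum_add_distrib, Finset.sum_add_distrib, ← Finset.mul_sum]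
        simp only [Finset.sum_const, Finset.card_univ, Fintype.card_fin, nsmul_eq_mul, mul_one]
        congr 1
        rw [Finset.mul_sum, Finset.sum_div]
        apply Finset.sum_congr rfl
        intro i _
        ring
      rw [hc, hsumd, hsumsq]
      field_simp
      ring
    rw [hAexp, abs_div, abs_of_pos hn', div_le_iff₀ hn']
    calc |∑ i, (Real.exp (s * dd v i) - (1 + s * dd v i + (s * dd v i)^2/2))|
        ≤ ∑ i, |Real.exp (s * dd v i) - (1 + s * dd v i + (s * dd v i)^2/2)| :=
          Finset.abs_sum_le_sum_abs _ _
      _ ≤ ∑ i, |s|^3 * Dd v * (dd v i)^2 := Finset.sum_le_sum (fun i _ => step1 i)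
      _ = |s|^3 * Dd v * (n * Vr v) := by rw [← Finset.mul_sum, hsumsq]
      _ = |s|^3 * Dd v * Vr v * n := by ring
  have hVD : Vr v ≤ Dd v * Dd v := by
    have hsum : ∑ i, dd v i ^ 2 ≤ Dd v * Dd v := by
      calc ∑ i, dd v i ^ 2 ≤ ∑ i, |dd v i| * Dd v := by
            apply Finset.sum_le_sum
            intro i _
            nlinarith [hdD i, abs_nonneg (dd v i), sq_abs (dd v i)]
        _ = (∑ i, |dd v i|) * Dd v := by rw [← Finset.sum_mul]
        _ = Dd v * Dd v := by unfold Dd; ring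
    have hn1 : (1:ℝ) ≤ n := by exact_mod_cast hn
    nlinarith [hsumsq, hV.le]
  have hGg : Gg s v / Vr v - s/2 = Real.log ((∑ i, Real.exp (s * dd v i)) / n) / s / Vr v - s/2 := by
    rw [Gg, if_neg hs]
  rw [hGg]
  exact est2 hs hDnn hV hVD h2 h3 step2

lemma div_div_div_same {a b c : ℝ} (hc : c ≠ 0) : (a / c) / (b / c) = a / b := by
  rcases eq_or_ne b 0 with rfl | hb
  · simp
  · field_simp

def LL (n : ℕ) (x : ℝ) : Filter (Fin n → ℝ) :=
  nhdsWithin (fun _ => x) {v : Fin n → ℝ | (∀ i, 0 < v i) ∧ ¬ (∀ i j, v i = v j)}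

section Limits

variable {n : ℕ} (hn : 0 < n) (x : ℝ) (hx : 0 < x)
include hn hx
set_option linter.unusedSectionVars false


lemma tend_coord (i : Fin n) : Filter.Tendsto (fun v : Fin n → ℝ => v i) (LL n x) (𝓝 x) :=
  ((continuous_apply i).tendsto _).mono_left nhdsWithin_le_nhds

lemma tend_log (i : Fin n) :
    Filter.Tendsto (fun v : Fin n → ℝ => Real.log (v i)) (LL n x) (𝓝 (Real.log x)) :=
  ((Real.continuousAt_log hx.ne').tendsto).comp (tend_coord hn x hx i)

lemma tend_ub : Filter.Tendsto (fun v : Fin n → ℝ => ub v) (LL n x) (𝓝 (Real.log x)) := by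
  have hsum : Filter.Tendsto (fun v : Fin n → ℝ => ∑ i, Real.log (v i)) (LL n x)
      (𝓝 (∑ _i : Fin n, Real.log x)) :=
    tendsto_finset_sum _ (fun i _ => tend_log hn x hx i)
  have h := hsum.div_const (n : ℝ)
  have hn' : (n:ℝ) ≠ 0 := Nat.cast_ne_zero.mpr hn.ne'
  have : (∑ _i : Fin n, Real.log x) / (n:ℝ) = Real.log x := by
    simp [Finset.sum_const, Finset.card_univ]
    field_simp
  rwa [this] at h

lemma tend_dd (i : Fin n) : Filter.Tendsto (fun v : Fin n → ℝ => dd v i) (LL n x) (𝓝 0) := by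
  have := (tend_log hn x hx i).sub (tend_ub hn x hx)
  simpa [dd] using this

lemma tend_Dd : Filter.Tendsto (fun v : Fin n → ℝ => Dd v) (LL n x) (𝓝 0) := by
  have hsum : Filter.Tendsto (fun v : Fin n → ℝ => ∑ i, |dd v i|) (LL n x)
      (𝓝 (∑ _i : Fin n, (0:ℝ))) := by
    apply tendsto_finset_sum
    intro i _
    have := (tend_dd hn x hx i).abs
    simpa using this
  simpa [Dd] using hsum

lemma tend_Vr : Filter.Tendsto (fun v : Fin n → ℝ => Vr v) (LL n x) (𝓝 0) := by
  have hsum : Filter.Tendsto (fun v : Fin n → ℝ => ∑ i, dd v i ^ 2) (LL n x)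
      (𝓝 (∑ _i : Fin n, (0:ℝ))) := by
    apply tendsto_finset_sum
    intro i _
    have := ((tend_dd hn x hx i).pow 2)
    simpa using this
  have h := hsum.div_const (n : ℝ)
  simp only [Finset.sum_const, smul_zero, zero_div] at h
  exact h

lemma ev_mem : ∀ᶠ v : Fin n → ℝ in (LL n x), (∀ i, 0 < v i) ∧ ¬ (∀ i j, v i = v j) :=
  self_mem_nhdsWithin

lemma ev_Vr_pos : ∀ᶠ v : Fin n → ℝ in (LL n x), 0 < Vr v := by
  filter_upwards [ev_mem hn x hx] with v hv
  exact Vr_pos hn hv.1 hv.2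

lemma tend_GV (s : ℝ) :
    Filter.Tendsto (fun v : Fin n → ℝ => Gg s v / Vr v) (LL n x) (𝓝 (s/2)) := by
  rcases eq_or_ne s 0 with rfl | hs
  · simp only [Gg, if_pos rfl, zero_div]
    simpa using (tendsto_const_nhds : Filter.Tendsto (fun _ : Fin n → ℝ => (0:ℝ)) (LL n x) (𝓝 0))
  · set C : ℝ := (|s|^3 + 2*(s^2/2+|s|^3)^2) / |s| with hC
    have hD := tend_Dd hn x hx
    have h1 : ∀ᶠ v : Fin n → ℝ in (LL n x), |s| * Dd v < 1 :=
      (hD.const_mul |s|).eventually_lt_const (by norm_num)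
    have h2 : ∀ᶠ v : Fin n → ℝ in (LL n x), Dd v < 1 := hD.eventually_lt_const (by norm_num)
    have h3 : ∀ᶠ v : Fin n → ℝ in (LL n x), (s^2/2 + |s|^3) * Dd v < 1/2 :=
      (hD.const_mul _).eventually_lt_const (by norm_num)
    have hev : ∀ᶠ v : Fin n → ℝ in (LL n x), ‖Gg s v / Vr v - s/2‖ ≤ C * Dd v := by
      filter_upwards [h1, h2, h3, ev_Vr_pos hn x hx] with v hv1 hv2 hv3 hVp
      exact est hn hs v hVp hv1.le hv2.le hv3.le
    have hCD : Filter.Tendsto (fun v : Fin n → ℝ => C * Dd v) (LL n x) (𝓝 0) := by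
      simpa using hD.const_mul C
    have := squeeze_zero_norm' hev hCD
    exact tendsto_sub_nhds_zero_iff.mp this

lemma tend_Gg (s : ℝ) :
    Filter.Tendsto (fun v : Fin n → ℝ => Gg s v) (LL n x) (𝓝 0) := by
  have h := (tend_GV hn x hx s).mul (tend_Vr hn x hx)
  rw [mul_zero] at h
  apply h.congr'
  filter_upwards [ev_Vr_pos hn x hx] with v hV
  field_simp

lemma claimC (s t : ℝ) :
    Filter.Tendsto (fun v : Fin n → ℝ =>
      (Real.exp (Gg s v) - Real.exp (Gg t v)) / Vr v) (LL n x) (𝓝 ((s - t)/2)) := by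
  rcases eq_or_ne s t with rfl | hst
  · simp only [sub_self, zero_div]
    simpa using (tendsto_const_nhds : Filter.Tendsto (fun _ : Fin n → ℝ => (0:ℝ)) (LL n x) (𝓝 0))
  · have hzV : Filter.Tendsto (fun v : Fin n → ℝ => (Gg s v - Gg t v) / Vr v) (LL n x)
        (𝓝 ((s - t)/2)) := by
      have h := (tend_GV hn x hx s).sub (tend_GV hn x hx t)
      have h2 : Filter.Tendsto (fun v : Fin n → ℝ => Gg s v / Vr v - Gg t v / Vr v) (LL n x)
          (𝓝 ((s - t)/2)) := by
        convert h using 2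
        ring
      exact h2.congr (fun v => (sub_div _ _ _).symm)
    have hz0 : Filter.Tendsto (fun v : Fin n → ℝ => Gg s v - Gg t v) (LL n x) (𝓝 0) := by
      have := (tend_Gg hn x hx s).sub (tend_Gg hn x hx t)
      simpa using this
    have hzne : ∀ᶠ v : Fin n → ℝ in (LL n x), Gg s v - Gg t v ≠ 0 := by
      have hne : (s - t)/2 ≠ 0 := by
        intro h
        apply hst
        have := sub_eq_zero.mp (by linarith : s - t = 0)
        linarith [this]
      filter_upwards [hzV.eventually_ne hne] with v hv
      intro h0
      rw [h0] at hv
      simp at hv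
    have hz' : Filter.Tendsto (fun v : Fin n → ℝ => Gg s v - Gg t v) (LL n x) (𝓝[≠] (0:ℝ)) := by
      apply tendsto_nhdsWithin_iff.mpr ⟨hz0, ?_⟩
      filter_upwards [hzne] with v hv
      exact hv
    have hexp : Filter.Tendsto (fun y : ℝ => (Real.exp y - 1) / y) (𝓝[≠] (0:ℝ)) (𝓝 1) := by
      have h := hasDerivAt_iff_tendsto_slope.mp (Real.hasDerivAt_exp 0)
      rw [Real.exp_zero] at h
      apply h.congr'
      filter_upwards with y
      simp [slope_def_field, Real.exp_zero]
    have hcomp := hexp.comp hz'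
    have hexpGt : Filter.Tendsto (fun v : Fin n → ℝ => Real.exp (Gg t v)) (LL n x) (𝓝 1) := by
      have := (Real.continuous_exp.tendsto 0).comp (tend_Gg hn x hx t)
      simpa [Function.comp_def] using this
    have hprod := (hexpGt.mul hcomp).mul hzV
    rw [mul_one, one_mul] at hprod
    apply hprod.congr'
    filter_upwards [hzne] with v hzv
    simp only [Function.comp]
    rw [show Real.exp (Gg s v) - Real.exp (Gg t v)
        = Real.exp (Gg t v) * (Real.exp (Gg s v - Gg t v) - 1) by
      rw [Real.exp_sub]
      field_simp]
    field_simp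

end Limits

theorem stmt_0 (n : ℕ) (hn : 2 ≤ n) (α β γ δ : ℝ) (hγδ : γ ≠ δ)
    (x : ℝ) (hx : 0 < x) :
    Tendsto (fun v : Fin n → ℝ => (pmean α v - pmean β v) / (pmean γ v - pmean δ v))
      (nhdsWithin (fun _ => x)
        {v : Fin n → ℝ | (∀ i, 0 < v i) ∧ ¬ (∀ i j, v i = v j)})
      (nhds ((α - β) / (γ - δ))) := by
  have hn0 : 0 < n := lt_of_lt_of_le two_pos hn
  have hnum := claimC hn0 x hx α β
  have hden := claimC hn0 x hx γ δ
  have hne : (γ - δ)/2 ≠ 0 := by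
    simp only [ne_eq, div_eq_zero_iff, sub_eq_zero]
    push_neg
    exact ⟨hγδ, by norm_num⟩
  have hdiv := hnum.div hden hne
  have hlim : ((α - β)/2) / ((γ - δ)/2) = (α - β)/(γ - δ) := div_div_div_same two_ne_zero
  rw [hlim] at hdiv
  have hfinal := hdiv.congr' (f₂ := fun v : Fin n → ℝ =>
      (pmean α v - pmean β v) / (pmean γ v - pmean δ v)) ?_
  · exact hfinal
  · filter_upwards [ev_mem hn0 x hx, ev_Vr_pos hn0 x hx] with v hv hV
    simp only [Pi.div_apply]
    rw [div_div_div_same hV.ne']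
    rw [pmean_eq hn0 hv.1 α, pmean_eq hn0 hv.1 β, pmean_eq hn0 hv.1 γ, pmean_eq hn0 hv.1 δ]
    rw [Real.exp_add, Real.exp_add, Real.exp_add, Real.exp_add]
    rw [← mul_sub, ← mul_sub, mul_div_mul_left _ _ (Real.exp_ne_zero _)]
end

section
/- Under the constraints x ≤ y ≤ z, xyz = α, x + y + z = β (α, β > 0, β³ > 27α), if r < 0 or 0 < r < 1 then the function h(x,y,z) = x^r + y^r + z^r attains its maximum when x < y = z and its minimum when x = y < z. -/
open Real Set



lemma aux6_strictConvexOn_rpow_neg {r : ℝ} (hr : r < 0) :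
    StrictConvexOn ℝ (Ioi (0:ℝ)) (fun x : ℝ => x ^ r) := by
  apply strictConvexOn_of_deriv2_pos (convex_Ioi 0)
  · intro x hx
    exact (Real.continuousAt_rpow_const x r (Or.inl (ne_of_gt hx))).continuousWithinAt
  · intro x hx
    rw [interior_Ioi] at hx
    have hx0 : (0:ℝ) < x := hx
    have h1 : deriv (fun y : ℝ => y ^ r) =ᶠ[nhds x] fun y => r * y ^ (r - 1) := by
      filter_upwards [eventually_ne_nhds (ne_of_gt hx0)] with y hy
      exact Real.deriv_rpow_const y r
    have h2 : deriv^[2] (fun y : ℝ => y ^ r) x = deriv (fun y => r * y ^ (r - 1)) x := by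
      simp only [Function.iterate_succ, Function.iterate_zero, Function.comp_apply, id_eq]
      exact Filter.EventuallyEq.deriv_eq h1
    rw [h2]
    have h3 : HasDerivAt (fun y : ℝ => r * y ^ (r - 1)) (r * ((r-1) * x ^ (r - 1 - 1))) x :=
      (Real.hasDerivAt_rpow_const (Or.inl (ne_of_gt hx0))).const_mul r
    rw [h3.deriv]
    have : (0:ℝ) < x ^ (r - 1 - 1) := Real.rpow_pos_of_pos hx0 _
    nlinarith [mul_pos (mul_pos_of_neg_of_neg hr (by linarith : r - 1 < 0)) this]

lemma aux6_E_neg {x y z r : ℝ} (hx : 0 < x) (hxy : x < y) (hyz : y < z)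
    (hr : 0 < r) (hr1 : r < 1) :
    x ^ r * (z - y) + y ^ r * (x - z) + z ^ r * (y - x) < 0 := by
  have hcon := Real.strictConcaveOn_rpow hr hr1
  have hxz : x < z := hxy.trans hyz
  have hzx : (0:ℝ) < z - x := by linarith
  have hA : (0:ℝ) < (z - y) / (z - x) := div_pos (by linarith) hzx
  have hB : (0:ℝ) < (y - x) / (z - x) := div_pos (by linarith) hzx
  have hAB : (z - y) / (z - x) + (y - x) / (z - x) = 1 := by
    rw [← add_div]
    rw [show z - y + (y - x) = z - x by ring, div_self hzx.ne']
  have h := hcon.2 (le_of_lt hx : x ∈ Ici (0:ℝ)) (le_of_lt (hx.trans hxz) : z ∈ Ici (0:ℝ))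
    (ne_of_lt hxz) hA hB hAB
  simp only [smul_eq_mul] at h
  have hy' : (z - y) / (z - x) * x + (y - x) / (z - x) * z = y := by
    field_simp; ring
  rw [hy'] at h
  have h2 := mul_lt_mul_of_pos_left h hzx
  have h3 : (z-x) * ((z-y)/(z-x) * x^r + (y-x)/(z-x) * z^r) = (z-y)*x^r + (y-x)*z^r := by
    field_simp
  rw [h3] at h2
  nlinarith [h2]

lemma aux6_E_pos {x y z r : ℝ} (hx : 0 < x) (hxy : x < y) (hyz : y < z) (hr : r < 0) :
    0 < x ^ r * (z - y) + y ^ r * (x - z) + z ^ r * (y - x) := by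
  have hcon := aux6_strictConvexOn_rpow_neg hr
  have hxz : x < z := hxy.trans hyz
  have hzx : (0:ℝ) < z - x := by linarith
  have hA : (0:ℝ) < (z - y) / (z - x) := div_pos (by linarith) hzx
  have hB : (0:ℝ) < (y - x) / (z - x) := div_pos (by linarith) hzx
  have hAB : (z - y) / (z - x) + (y - x) / (z - x) = 1 := by
    rw [← add_div]
    rw [show z - y + (y - x) = z - x by ring, div_self hzx.ne']
  have h := hcon.2 (hx : x ∈ Ioi (0:ℝ)) (hx.trans hxz : z ∈ Ioi (0:ℝ))
    (ne_of_lt hxz) hA hB hAB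
  simp only [smul_eq_mul] at h
  have hy' : (z - y) / (z - x) * x + (y - x) / (z - x) * z = y := by
    field_simp; ring
  rw [hy'] at h
  have h2 := mul_lt_mul_of_pos_left h hzx
  have h3 : (z-x) * ((z-y)/(z-x) * x^r + (y-x)/(z-x) * z^r) = (z-y)*x^r + (y-x)*z^r := by
    field_simp
  rw [h3] at h2
  nlinarith [h2]



noncomputable def aux6D (a b x : ℝ) : ℝ := (b - x)^2 - 4*a/x
noncomputable def aux6y (a b x : ℝ) : ℝ := ((b - x) - Real.sqrt (aux6D a b x))/2
noncomputable def aux6z (a b x : ℝ) : ℝ := ((b - x) + Real.sqrt (aux6D a b x))/2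
noncomputable def aux6H (a b r x : ℝ) : ℝ := x ^ r + aux6y a b x ^ r + aux6z a b x ^ r
def aux6g (a b x : ℝ) : ℝ := x*(b-x)^2 - 4*a
def aux6q (a b x : ℝ) : ℝ := 2*x^3 - b*x^2 + a

lemma aux6_g_mono (a b : ℝ) : StrictMonoOn (aux6g a b) (Icc 0 (b/3)) := by
  intro x hx y hy hxy
  simp only [aux6g]
  nlinarith [hx.1, hx.2, hy.1, hy.2, hxy, sq_nonneg (b - x - y), sq_nonneg (x - y),
    mul_nonneg hx.1 (sub_nonneg.2 hy.2), mul_pos (sub_pos.2 hxy) (sub_pos.2 (lt_of_lt_of_le hxy hy.2))]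

lemma aux6_q_anti (a b : ℝ) : StrictAntiOn (aux6q a b) (Icc 0 (b/3)) := by
  intro x hx y hy hxy
  simp only [aux6q]
  nlinarith [hx.1, hx.2, hy.1, hy.2, hxy, sq_nonneg (x - y),
    mul_nonneg hx.1 (sub_nonneg.2 hy.2), mul_pos (sub_pos.2 hxy) (sub_pos.2 (lt_of_lt_of_le hxy hy.2))]

lemma aux6_exists_roots (a b : ℝ) (ha : 0 < a) (hb : 0 < b) (hab : b ^ 3 > 27 * a) :
    ∃ xm xp : ℝ, 0 < xm ∧ xm < xp ∧ xp < b/3 ∧ aux6g a b xm = 0 ∧ aux6q a b xp = 0 := by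
  have hb3 : (0:ℝ) < b/3 := by linarith
  have hgc : ContinuousOn (aux6g a b) (Icc 0 (b/3)) := by
    apply Continuous.continuousOn; unfold aux6g; continuity
  have hqc : ContinuousOn (aux6q a b) (Icc 0 (b/3)) := by
    apply Continuous.continuousOn; unfold aux6q; continuity
  have hg0 : aux6g a b 0 < 0 := by simp [aux6g]; linarith
  have hgb : 0 < aux6g a b (b/3) := by simp only [aux6g]; nlinarith
  have hq0 : 0 < aux6q a b 0 := by simp [aux6q]; linarith
  have hqb : aux6q a b (b/3) < 0 := by simp only [aux6q]; nlinarith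
  obtain ⟨xm, hxm_mem, hxm⟩ := intermediate_value_Icc (le_of_lt hb3) hgc
    (⟨le_of_lt hg0, le_of_lt hgb⟩ : (0:ℝ) ∈ Icc (aux6g a b 0) (aux6g a b (b/3)))
  obtain ⟨xp, hxp_mem, hxp⟩ := intermediate_value_Icc' (le_of_lt hb3) hqc
    (⟨le_of_lt hqb, le_of_lt hq0⟩ : (0:ℝ) ∈ Icc (aux6q a b (b/3)) (aux6q a b 0))
  have hxm0 : 0 < xm := by
    rcases lt_or_eq_of_le hxm_mem.1 with h | h
    · exact h
    · exfalso; rw [← h] at hxm; linarith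
  have hxpb : xp < b/3 := by
    rcases lt_or_eq_of_le hxp_mem.2 with h | h
    · exact h
    · exfalso; rw [h] at hxp; linarith
  have hxp0 : 0 < xp := by
    rcases lt_or_eq_of_le hxp_mem.1 with h | h
    · exact h
    · exfalso; rw [← h] at hxp; linarith
  have hgxp : 0 < aux6g a b xp := by
    have hqxp : aux6q a b xp = 0 := hxp
    simp only [aux6q] at hqxp
    simp only [aux6g]
    nlinarith [sq_nonneg (b - 3*xp), mul_pos hxp0 (mul_pos (sub_pos.2 (show xp < b by linarith)) (sub_pos.2 (show 3*xp < b by linarith)))]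
  have hxmxp : xm < xp := by
    have := (aux6_g_mono a b).lt_iff_lt hxm_mem ⟨le_of_lt hxp0, le_of_lt hxpb⟩
    rw [← this]
    rw [hxm]; exact hgxp
  exact ⟨xm, xp, hxm0, hxmxp, hxpb, hxm, hxp⟩




lemma aux6_y_pos {a b x : ℝ} (ha : 0 < a) (hx : 0 < x) (hxb : x < b) :
    0 < aux6y a b x := by
  unfold aux6y
  have hs : 0 < b - x := by linarith
  have h1 : Real.sqrt (aux6D a b x) < b - x := by
    rw [Real.sqrt_lt' hs]
    unfold aux6D
    have : 0 < 4*a/x := by positivity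
    linarith
  linarith

lemma aux6_y_le_z {a b x : ℝ} : aux6y a b x ≤ aux6z a b x := by
  unfold aux6y aux6z
  have := Real.sqrt_nonneg (aux6D a b x)
  linarith

lemma aux6_sum {a b x : ℝ} : aux6y a b x + aux6z a b x = b - x := by
  unfold aux6y aux6z; ring

lemma aux6_prod {a b x : ℝ} (hD : 0 ≤ aux6D a b x) :
    aux6y a b x * aux6z a b x = a / x := by
  have hw : Real.sqrt (aux6D a b x) ^ 2 = aux6D a b x := Real.sq_sqrt hD
  unfold aux6y aux6z
  unfold aux6D at hw ⊢
  linear_combination (-(1:ℝ)/4) * hw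

lemma aux6_mem {a b x xm xp : ℝ} (ha : 0 < a) (hb : 0 < b)
    (hxm0 : 0 < xm) (hxmxp : xm < xp) (hxpb : xp < b/3)
    (hgm : aux6g a b xm = 0) (hqp : aux6q a b xp = 0)
    (hx : x ∈ Icc xm xp) :
    0 < x ∧ x ≤ aux6y a b x ∧ aux6y a b x ≤ aux6z a b x ∧
      x * aux6y a b x * aux6z a b x = a ∧ x + aux6y a b x + aux6z a b x = b := by
  have hx0 : 0 < x := lt_of_lt_of_le hxm0 hx.1
  have hx3 : 3*x < b := by have := hx.2; linarith [hxpb]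
  have hxb : x < b := by linarith
  have hmm : xm ∈ Icc (0:ℝ) (b/3) := ⟨hxm0.le, by linarith⟩
  have hmx : x ∈ Icc (0:ℝ) (b/3) := ⟨hx0.le, by linarith⟩
  have hmp : xp ∈ Icc (0:ℝ) (b/3) := ⟨by linarith, hxpb.le⟩
  have hgx : 0 ≤ aux6g a b x := by
    have := (aux6_g_mono a b).monotoneOn hmm hmx hx.1
    linarith [hgm ▸ this]
  have hDg : aux6D a b x = aux6g a b x / x := by
    unfold aux6D aux6g; field_simp
  have hD : 0 ≤ aux6D a b x := by rw [hDg]; positivity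
  have hqx : 0 ≤ aux6q a b x := by
    have := (aux6_q_anti a b).antitoneOn hmx hmp hx.2
    linarith [hqp ▸ this]
  have hkey : (b - 3*x)^2 - aux6D a b x = 4 * aux6q a b x / x := by
    unfold aux6D aux6q; field_simp; ring
  have hDle : aux6D a b x ≤ (b - 3*x)^2 := by
    have h4 : 0 ≤ 4 * aux6q a b x / x := by positivity
    linarith
  have hsqrt : Real.sqrt (aux6D a b x) ≤ b - 3*x := by
    calc Real.sqrt (aux6D a b x) ≤ Real.sqrt ((b - 3*x)^2) := Real.sqrt_le_sqrt hDle
    _ = b - 3*x := Real.sqrt_sq (by linarith)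
  have hxy : x ≤ aux6y a b x := by
    unfold aux6y; linarith
  refine ⟨hx0, hxy, aux6_y_le_z, ?_, ?_⟩
  · rw [mul_assoc, aux6_prod hD]
    field_simp
  · have := aux6_sum (a := a) (b := b) (x := x); linarith

lemma aux6_repr {a b xm xp : ℝ} (ha : 0 < a) (hb : 0 < b)
    (hxm0 : 0 < xm) (hxmxp : xm < xp) (hxpb : xp < b/3)
    (hgm : aux6g a b xm = 0) (hqp : aux6q a b xp = 0)
    {x y z : ℝ} (hx0 : 0 < x) (hxy : x ≤ y) (hyz : y ≤ z)
    (hprod : x * y * z = a) (hsum : x + y + z = b) :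
    x ∈ Icc xm xp ∧ y = aux6y a b x ∧ z = aux6z a b x := by
  have hy0 : 0 < y := lt_of_lt_of_le hx0 hxy
  have hz0 : 0 < z := lt_of_lt_of_le hy0 hyz
  have hx3 : 3*x ≤ b := by linarith
  have hD_eq : aux6D a b x = (z - y)^2 := by
    unfold aux6D
    have hyz' : a / x = y * z := by
      rw [div_eq_iff hx0.ne']; linear_combination -hprod
    rw [mul_div_assoc, hyz']
    linear_combination (-(b - x + y + z)) * hsum
  have hsqrt : Real.sqrt (aux6D a b x) = z - y := by
    rw [hD_eq]; exact Real.sqrt_sq (by linarith)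
  have hyeq : y = aux6y a b x := by
    unfold aux6y; rw [hsqrt]; linarith
  have hzeq : z = aux6z a b x := by
    unfold aux6z; rw [hsqrt]; linarith
  have hmm : xm ∈ Icc (0:ℝ) (b/3) := ⟨hxm0.le, by linarith⟩
  have hmx : x ∈ Icc (0:ℝ) (b/3) := ⟨hx0.le, by linarith⟩
  have hmp : xp ∈ Icc (0:ℝ) (b/3) := ⟨by linarith, hxpb.le⟩
  have hgx : 0 ≤ aux6g a b x := by
    have heq : aux6g a b x = x * (z - y)^2 := by
      unfold aux6g
      linear_combination (-x*(b - x + y + z)) * hsum + 4 * hprod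
    rw [heq]; positivity
  have hqx : 0 ≤ aux6q a b x := by
    have heq : aux6q a b x = x * (y - x) * (z - x) := by
      unfold aux6q
      linear_combination x^2 * hsum - hprod
    rw [heq]
    have : 0 ≤ y - x := by linarith
    have : 0 ≤ z - x := by linarith
    positivity
  constructor
  · constructor
    · rw [← (aux6_g_mono a b).le_iff_le hmm hmx]
      rw [hgm]; exact hgx
    · rw [← (aux6_q_anti a b).le_iff_ge hmp hmx]
      rw [hqp]; exact hqx
  · exact ⟨hyeq, hzeq⟩




lemma aux6_alg (x yv zv w r A B C a b : ℝ) (hx : x ≠ 0) (hw : w ≠ 0)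
    (h1 : zv - yv = w) (h2 : yv + zv = b - x) (h3 : x * (yv * zv) = a) :
    (r * A + (-1 - (-2*(b-x) + 4*a/x^2)/(2*w))/2 * r * B) +
      (-1 + (-2*(b-x) + 4*a/x^2)/(2*w))/2 * r * C
    = r * ((A*x)*(zv-yv) + (B*yv)*(x-zv) + (C*zv)*(yv-x)) / (x*(zv-yv)) := by
  obtain rfl : w = zv - yv := h1.symm
  obtain rfl : a = x * (yv * zv) := h3.symm
  obtain rfl : b = (yv + zv) + x := by linarith
  field_simp
  ring

lemma aux6_deriv_neg {a b r x : ℝ} (ha : 0 < a) (hx : 0 < x) (hx3 : 3*x < b)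
    (hD : 0 < aux6D a b x) (hq : 0 < aux6q a b x)
    (hr : r < 0 ∨ (0 < r ∧ r < 1)) :
    deriv (aux6H a b r) x < 0 := by
  have hxb : x < b := by linarith
  set w : ℝ := Real.sqrt ((b - x)^2 - 4*a/x) with hw_def
  have hDx : aux6D a b x = (b - x)^2 - 4*a/x := rfl
  have hwpos : 0 < w := by rw [hw_def]; exact Real.sqrt_pos.2 (by rw [← hDx]; exact hD)
  have hw2 : w^2 = (b - x)^2 - 4*a/x := Real.sq_sqrt (by rw [← hDx]; exact hD.le)
  -- names for y and z
  set yv : ℝ := ((b - x) - w)/2 with hyv_def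
  set zv : ℝ := ((b - x) + w)/2 with hzv_def
  have hyv : aux6y a b x = yv := by rw [aux6y, hDx, hyv_def]
  have hzv : aux6z a b x = zv := by rw [aux6z, hDx, hzv_def]
  have hy0 : 0 < yv := by rw [← hyv]; exact aux6_y_pos ha hx hxb
  have hz0 : 0 < zv := by rw [hzv_def]; linarith
  have hyz : yv < zv := by rw [hyv_def, hzv_def]; linarith
  have hxy : x < yv := by
    have hkey : (b - 3*x)^2 - ((b - x)^2 - 4*a/x) = 4 * aux6q a b x / x := by
      unfold aux6q; field_simp; ring
    have h4 : 0 < 4 * aux6q a b x / x := by positivity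
    have hDlt : (b - x)^2 - 4*a/x < (b - 3*x)^2 := by linarith
    have hwlt : w < b - 3*x := by
      rw [hw_def, Real.sqrt_lt' (by linarith : 0 < b - 3*x)]
      exact hDlt
    rw [hyv_def]; linarith
  have hsum : yv + zv = b - x := by rw [hyv_def, hzv_def]; ring
  have hprod : x * (yv * zv) = a := by
    have : yv * zv = ((b-x)^2 - w^2)/4 := by rw [hyv_def, hzv_def]; ring
    rw [this, hw2]
    field_simp
    ring
  -- derivative construction
  have hDva : HasDerivAt (fun t => (b-t)^2 - 4*a/t) (-2*(b-x) + 4*a/x^2) x := by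
    have h2 := (((hasDerivAt_id x).const_sub b).pow 2).sub
      ((hasDerivAt_const x (4*a)).div (hasDerivAt_id x) (ne_of_gt hx))
    convert h2 using 1
    · rfl
    · rfl
    · rfl
    · simp; ring
  have hws : HasDerivAt (fun t => Real.sqrt ((b-t)^2 - 4*a/t))
      ((-2*(b-x) + 4*a/x^2) / (2*w)) x := by
    have := hDva.sqrt (by rw [← hDx]; exact hD.ne')
    exact this
  have hyd : HasDerivAt (fun t => ((b-t) - Real.sqrt ((b-t)^2 - 4*a/t))/2)
      ((-1 - (-2*(b-x) + 4*a/x^2)/(2*w))/2) x :=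
    (((hasDerivAt_id x).const_sub b).sub hws).div_const 2
  have hzd : HasDerivAt (fun t => ((b-t) + Real.sqrt ((b-t)^2 - 4*a/t))/2)
      ((-1 + (-2*(b-x) + 4*a/x^2)/(2*w))/2) x :=
    (((hasDerivAt_id x).const_sub b).add hws).div_const 2
  have hX : HasDerivAt (fun t : ℝ => t ^ r) (r * x^(r-1)) x :=
    Real.hasDerivAt_rpow_const (Or.inl hx.ne')
  have hY : HasDerivAt (fun t => (((b-t) - Real.sqrt ((b-t)^2 - 4*a/t))/2) ^ r)
      ((-1 - (-2*(b-x) + 4*a/x^2)/(2*w))/2 * r * yv^(r-1)) x :=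
    hyd.rpow_const (Or.inl hy0.ne')
  have hZ : HasDerivAt (fun t => (((b-t) + Real.sqrt ((b-t)^2 - 4*a/t))/2) ^ r)
      ((-1 + (-2*(b-x) + 4*a/x^2)/(2*w))/2 * r * zv^(r-1)) x :=
    hzd.rpow_const (Or.inl hz0.ne')
  have hH : HasDerivAt (aux6H a b r)
      ((r * x^(r-1) + (-1 - (-2*(b-x) + 4*a/x^2)/(2*w))/2 * r * yv^(r-1)) +
        (-1 + (-2*(b-x) + 4*a/x^2)/(2*w))/2 * r * zv^(r-1)) x :=
    (hX.add hY).add hZ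
  rw [hH.deriv]
  rw [aux6_alg x yv zv w r (x^(r-1)) (yv^(r-1)) (zv^(r-1)) a b hx.ne' hwpos.ne'
    (by rw [hyv_def, hzv_def]; ring) hsum hprod]
  have e1 : x^(r-1) * x = x^r := by
    rw [Real.rpow_sub_one hx.ne']; field_simp
  have e2 : yv^(r-1) * yv = yv^r := by
    rw [Real.rpow_sub_one hy0.ne']; field_simp
  have e3 : zv^(r-1) * zv = zv^r := by
    rw [Real.rpow_sub_one hz0.ne']; field_simp
  rw [e1, e2, e3]
  have hden : 0 < x * (zv - yv) := mul_pos hx (by linarith)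
  apply div_neg_of_neg_of_pos _ hden
  rcases hr with hneg | ⟨hr0, hr1⟩
  · have hE := aux6_E_pos hx hxy hyz hneg
    nlinarith
  · have hE := aux6_E_neg hx hxy hyz hr0 hr1
    nlinarith

lemma aux6_cont {a b r xm xp : ℝ} (ha : 0 < a) (hb : 0 < b)
    (hxm0 : 0 < xm) (hxpb : xp < b/3) :
    ContinuousOn (aux6H a b r) (Icc xm xp) := by
  have hpos : ∀ t ∈ Icc xm xp, 0 < t := fun t ht => lt_of_lt_of_le hxm0 ht.1
  have htb : ∀ t ∈ Icc xm xp, t < b := fun t ht => by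
    have := ht.2; linarith [hxpb]
  have hDc : ContinuousOn (fun t => (b-t)^2 - 4*a/t) (Icc xm xp) := by
    apply ContinuousOn.sub
    · exact ((continuous_const.sub continuous_id).pow 2).continuousOn
    · exact continuousOn_const.div continuousOn_id (fun t ht => (hpos t ht).ne')
  have hyc : ContinuousOn (fun t => ((b-t) - Real.sqrt ((b-t)^2 - 4*a/t))/2) (Icc xm xp) :=
    (((continuous_const.sub continuous_id).continuousOn).sub hDc.sqrt).div_const 2
  have hzc : ContinuousOn (fun t => ((b-t) + Real.sqrt ((b-t)^2 - 4*a/t))/2) (Icc xm xp) :=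
    (((continuous_const.sub continuous_id).continuousOn).add hDc.sqrt).div_const 2
  have hy_ne : ∀ t ∈ Icc xm xp, ((b-t) - Real.sqrt ((b-t)^2 - 4*a/t))/2 ≠ 0 := by
    intro t ht
    have := aux6_y_pos (a := a) (b := b) (x := t) ha (hpos t ht) (htb t ht)
    unfold aux6y aux6D at this
    exact this.ne'
  have hz_ne : ∀ t ∈ Icc xm xp, ((b-t) + Real.sqrt ((b-t)^2 - 4*a/t))/2 ≠ 0 := by
    intro t ht
    have h1 := aux6_y_pos (a := a) (b := b) (x := t) ha (hpos t ht) (htb t ht)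
    unfold aux6y aux6D at h1
    have h2 := Real.sqrt_nonneg ((b-t)^2 - 4*a/t)
    have : 0 < ((b-t) + Real.sqrt ((b-t)^2 - 4*a/t))/2 := by linarith
    exact this.ne'
  unfold aux6H aux6y aux6z aux6D
  apply ContinuousOn.add
  apply ContinuousOn.add
  · exact continuousOn_id.rpow_const (fun t ht => Or.inl (hpos t ht).ne')
  · exact hyc.rpow_const (fun t ht => Or.inl (hy_ne t ht))
  · exact hzc.rpow_const (fun t ht => Or.inl (hz_ne t ht))


theorem stmt_6 (a b r : ℝ) (ha : 0 < a) (hb : 0 < b) (hab : b ^ 3 > 27 * a) (hr : r < 0 ∨ (0 < r ∧ r < 1)) :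
    ∃ pmax ∈ {p : ℝ × ℝ × ℝ | 0 < p.1 ∧ p.1 ≤ p.2.1 ∧ p.2.1 ≤ p.2.2 ∧
        p.1 * p.2.1 * p.2.2 = a ∧ p.1 + p.2.1 + p.2.2 = b},
    ∃ pmin ∈ {p : ℝ × ℝ × ℝ | 0 < p.1 ∧ p.1 ≤ p.2.1 ∧ p.2.1 ≤ p.2.2 ∧
        p.1 * p.2.1 * p.2.2 = a ∧ p.1 + p.2.1 + p.2.2 = b},
      (pmax.1 < pmax.2.1 ∧ pmax.2.1 = pmax.2.2) ∧
      (pmin.1 = pmin.2.1 ∧ pmin.2.1 < pmin.2.2) ∧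
      ∀ q ∈ {p : ℝ × ℝ × ℝ | 0 < p.1 ∧ p.1 ≤ p.2.1 ∧ p.2.1 ≤ p.2.2 ∧
          p.1 * p.2.1 * p.2.2 = a ∧ p.1 + p.2.1 + p.2.2 = b},
        q.1 ^ r + q.2.1 ^ r + q.2.2 ^ r ≤ pmax.1 ^ r + pmax.2.1 ^ r + pmax.2.2 ^ r ∧
        pmin.1 ^ r + pmin.2.1 ^ r + pmin.2.2 ^ r ≤ q.1 ^ r + q.2.1 ^ r + q.2.2 ^ r := by
  obtain ⟨xm, xp, hxm0, hxmxp, hxpb, hgm, hqp⟩ := aux6_exists_roots a b ha hb hab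
  have hxp0 : 0 < xp := hxm0.trans hxmxp
  have hanti : StrictAntiOn (aux6H a b r) (Icc xm xp) := by
    apply strictAntiOn_of_deriv_neg (convex_Icc xm xp) (aux6_cont ha hb hxm0 hxpb)
    intro x hx
    rw [interior_Icc] at hx
    have hx0 : 0 < x := hxm0.trans hx.1
    have hx3 : 3*x < b := by have := hx.2; linarith [hxpb]
    have hmm : xm ∈ Icc (0:ℝ) (b/3) := ⟨hxm0.le, by linarith⟩
    have hmx : x ∈ Icc (0:ℝ) (b/3) := ⟨hx0.le, by linarith⟩
    have hmp : xp ∈ Icc (0:ℝ) (b/3) := ⟨hxp0.le, hxpb.le⟩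
    have hg : 0 < aux6g a b x := by
      have := (aux6_g_mono a b) hmm hmx hx.1
      rw [hgm] at this; exact this
    have hD : 0 < aux6D a b x := by
      have hDg : aux6D a b x = aux6g a b x / x := by unfold aux6D aux6g; field_simp
      rw [hDg]; positivity
    have hq : 0 < aux6q a b x := by
      have := (aux6_q_anti a b) hmx hmp hx.2
      rw [hqp] at this; exact this
    exact aux6_deriv_neg ha hx0 hx3 hD hq hr
  have hxm_mem : xm ∈ Icc xm xp := ⟨le_refl _, hxmxp.le⟩
  have hxp_mem : xp ∈ Icc xm xp := ⟨hxmxp.le, le_refl _⟩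
  obtain ⟨h1,h2,h3,h4,h5⟩ := aux6_mem ha hb hxm0 hxmxp hxpb hgm hqp hxm_mem
  obtain ⟨g1,g2,g3,g4,g5⟩ := aux6_mem ha hb hxm0 hxmxp hxpb hgm hqp hxp_mem
  have hDm0 : aux6D a b xm = 0 := by
    have hDg : aux6D a b xm = aux6g a b xm / xm := by unfold aux6D aux6g; field_simp
    rw [hDg, hgm, zero_div]
  have hmax1 : xm < aux6y a b xm := by
    unfold aux6y; rw [hDm0, Real.sqrt_zero]; linarith [hxmxp, hxpb]
  have hmax2 : aux6y a b xm = aux6z a b xm := by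
    unfold aux6y aux6z; rw [hDm0, Real.sqrt_zero]; ring
  have h4a : (4:ℝ)*a = 4*b*xp^2 - 8*xp^3 := by
    unfold aux6q at hqp; linarith
  have hDp : aux6D a b xp = (b - 3*xp)^2 := by
    unfold aux6D
    rw [show (4:ℝ)*a = 4*b*xp^2 - 8*xp^3 from h4a]
    field_simp
    ring
  have hsp : Real.sqrt (aux6D a b xp) = b - 3*xp := by
    rw [hDp]; exact Real.sqrt_sq (by linarith)
  have hmin1 : xp = aux6y a b xp := by
    unfold aux6y; rw [hsp]; ring
  have hmin2 : aux6y a b xp < aux6z a b xp := by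
    unfold aux6y aux6z; rw [hsp]; have : 0 < b - 3*xp := by linarith
    linarith
  refine ⟨(xm, aux6y a b xm, aux6z a b xm), ⟨h1,h2,h3,h4,h5⟩,
          (xp, aux6y a b xp, aux6z a b xp), ⟨g1,g2,g3,g4,g5⟩,
          ⟨hmax1, hmax2⟩, ⟨hmin1, hmin2⟩, ?_⟩
  intro qq hqq
  obtain ⟨hq1, hq2, hq3, hq4, hq5⟩ := hqq
  obtain ⟨hqIcc, hqy, hqz⟩ := aux6_repr ha hb hxm0 hxmxp hxpb hgm hqp hq1 hq2 hq3 hq4 hq5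
  have hval : qq.1^r + qq.2.1^r + qq.2.2^r = aux6H a b r qq.1 := by
    rw [hqy, hqz]; rfl
  constructor
  · show qq.1^r + qq.2.1^r + qq.2.2^r ≤ xm^r + aux6y a b xm ^ r + aux6z a b xm ^ r
    rw [hval]
    exact hanti.antitoneOn hxm_mem hqIcc hqIcc.1
  · show xp^r + aux6y a b xp ^ r + aux6z a b xp ^ r ≤ qq.1^r + qq.2.1^r + qq.2.2^r
    rw [hval]
    exact hanti.antitoneOn hqIcc hxp_mem hqIcc.2
end

section
/- Let f₁, f₂ : [a,b] → ℝ be continuous on [a,b], differentiable on (a,b), with f₂'(x) ≠ 0 on (a,b). If f₁'/f₂' is (strictly) increasing on (a,b), then so are the functions x ↦ (f₁(x) - f₁(a))/(f₂(x) - f₂(a)) and x ↦ (f₁(x) - f₁(b))/(f₂(x) - f₂(b)). -/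
open Set

theorem stmt_8 (a b : ℝ) (hab : a < b) (f₁ f₂ f₁' f₂' : ℝ → ℝ)
    (hc₁ : ContinuousOn f₁ (Icc a b)) (hc₂ : ContinuousOn f₂ (Icc a b))
    (hd₁ : ∀ x ∈ Ioo a b, HasDerivAt f₁ (f₁' x) x)
    (hd₂ : ∀ x ∈ Ioo a b, HasDerivAt f₂ (f₂' x) x)
    (hne : ∀ x ∈ Ioo a b, f₂' x ≠ 0)
    (hmono : StrictMonoOn (fun x => f₁' x / f₂' x) (Ioo a b)) :
    StrictMonoOn (fun x => (f₁ x - f₁ a) / (f₂ x - f₂ a)) (Ioo a b) ∧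
    StrictMonoOn (fun x => (f₁ x - f₁ b) / (f₂ x - f₂ b)) (Ioo a b) := by
  -- Cauchy MVT helper
  have cauchy : ∀ u v, a ≤ u → u < v → v ≤ b →
      ∃ c ∈ Ioo u v, f₁ v - f₁ u = (f₁' c / f₂' c) * (f₂ v - f₂ u) := by
    intro u v hau huv hvb
    have hsub : Ioo u v ⊆ Ioo a b := Ioo_subset_Ioo hau hvb
    obtain ⟨c, hc, hceq⟩ := exists_ratio_hasDerivAt_eq_ratio_slope f₁ f₁' huv
      (hc₁.mono (Icc_subset_Icc hau hvb)) (fun x hx => hd₁ x (hsub hx))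
      f₂ f₂' (hc₂.mono (Icc_subset_Icc hau hvb)) (fun x hx => hd₂ x (hsub hx))
    refine ⟨c, hc, ?_⟩
    have h2 := hne c (hsub hc)
    field_simp
    linarith [hceq]
  -- f₂ is injective on Icc a b
  have hinj : InjOn f₂ (Icc a b) := by
    intro u hu v hv huv
    by_contra hne'
    rcases lt_or_gt_of_ne hne' with h | h
    · have hsub : Ioo u v ⊆ Ioo a b := Ioo_subset_Ioo hu.1 hv.2
      obtain ⟨c, hc, hceq⟩ := exists_hasDerivAt_eq_slope f₂ f₂' h
        (hc₂.mono (Icc_subset_Icc hu.1 hv.2)) (fun x hx => hd₂ x (hsub hx))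
      exact hne c (hsub hc) (by rw [hceq, huv]; simp)
    · have hsub : Ioo v u ⊆ Ioo a b := Ioo_subset_Ioo hv.1 hu.2
      obtain ⟨c, hc, hceq⟩ := exists_hasDerivAt_eq_slope f₂ f₂' h
        (hc₂.mono (Icc_subset_Icc hv.1 hu.2)) (fun x hx => hd₂ x (hsub hx))
      exact hne c (hsub hc) (by rw [hceq, huv]; simp)
  -- differences of f₂ over overlapping-direction intervals have the same sign
  have hsign : ∀ u v u' v', a ≤ u → u < v → v ≤ b → a ≤ u' → u' < v' → v' ≤ b →
      0 < (f₂ v - f₂ u) * (f₂ v' - f₂ u') := by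
    intro u v u' v' hau huv hvb hau' huv' hvb'
    rcases hc₂.strictMonoOn_of_injOn_Icc' hab.le hinj with hm | hm
    · have h1 : f₂ u < f₂ v := hm ⟨hau, huv.le.trans hvb⟩ ⟨hau.trans huv.le, hvb⟩ huv
      have h2 : f₂ u' < f₂ v' := hm ⟨hau', huv'.le.trans hvb'⟩ ⟨hau'.trans huv'.le, hvb'⟩ huv'
      nlinarith
    · have h1 : f₂ v < f₂ u := hm ⟨hau, huv.le.trans hvb⟩ ⟨hau.trans huv.le, hvb⟩ huv
      have h2 : f₂ v' < f₂ u' := hm ⟨hau', huv'.le.trans hvb'⟩ ⟨hau'.trans huv'.le, hvb'⟩ huv'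
      nlinarith
  constructor
  · intro x hx y hy hxy
    obtain ⟨ξ, hξ, hξeq⟩ := cauchy a x le_rfl hx.1 hx.2.le
    obtain ⟨η, hη, hηeq⟩ := cauchy x y hx.1.le hxy hy.2.le
    set q₁ := f₁' ξ / f₂' ξ
    set q₂ := f₁' η / f₂' η
    have hq : q₁ < q₂ := hmono ⟨hξ.1, hξ.2.trans hx.2⟩ ⟨hx.1.trans hη.1, hη.2.trans hy.2⟩
      (hξ.2.trans hη.1)
    set A := f₂ x - f₂ a with hA
    set B := f₂ y - f₂ x with hB
    have hAB : 0 < A * B := hsign a x x y le_rfl hx.1 hx.2.le hx.1.le hxy hy.2.le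
    have hA0 : A ≠ 0 := by rintro h; rw [h] at hAB; simp at hAB
    have hABne : A + B ≠ 0 := by
      intro h
      have hBA : B = -A := by linarith
      rw [hBA] at hAB
      nlinarith [sq_nonneg A]
    have hBAB : 0 < B / (A + B) := by
      rcases lt_or_gt_of_ne hA0 with h | h
      · have hB0 : B < 0 := by nlinarith
        apply div_pos_of_neg_of_neg hB0; linarith
      · have hB0 : 0 < B := by nlinarith
        apply div_pos hB0; linarith
    have hfy : f₁ y - f₁ a = q₁ * A + q₂ * B := by
      have : f₁ y - f₁ a = (f₁ x - f₁ a) + (f₁ y - f₁ x) := by ring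
      rw [this, hξeq, hηeq]
    have hfya : f₂ y - f₂ a = A + B := by rw [hA, hB]; ring
    simp only
    rw [hξeq, hfy, hfya, mul_div_assoc, div_self hA0, mul_one]
    have : (q₁ * A + q₂ * B) / (A + B) - q₁ = (q₂ - q₁) * (B / (A + B)) := by
      field_simp
      ring
    nlinarith [this]
  · intro x hx y hy hxy
    obtain ⟨ξ, hξ, hξeq⟩ := cauchy x y hx.1.le hxy hy.2.le
    obtain ⟨η, hη, hηeq⟩ := cauchy y b hy.1.le hy.2 le_rfl
    set q₁ := f₁' ξ / f₂' ξ
    set q₂ := f₁' η / f₂' η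
    have hq : q₁ < q₂ := hmono ⟨hx.1.trans hξ.1, hξ.2.trans hy.2⟩ ⟨hx.1.trans (hxy.trans hη.1), hη.2⟩
      (hξ.2.trans hη.1)
    set A := f₂ y - f₂ x with hA
    set B := f₂ b - f₂ y with hB
    have hAB : 0 < A * B := hsign x y y b hx.1.le hxy hy.2.le hy.1.le hy.2 le_rfl
    have hA0 : A ≠ 0 := by rintro h; rw [h] at hAB; simp at hAB
    have hABne : A + B ≠ 0 := by
      intro h
      have hBA : B = -A := by linarith
      rw [hBA] at hAB
      nlinarith [sq_nonneg A]
    have hAAB : 0 < A / (A + B) := by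
      rcases lt_or_gt_of_ne hA0 with h | h
      · have hB0 : B < 0 := by nlinarith
        apply div_pos_of_neg_of_neg h; linarith
      · have hB0 : 0 < B := by nlinarith
        apply div_pos h; linarith
    have hfx : f₁ x - f₁ b = -(q₁ * A + q₂ * B) := by
      have : f₁ x - f₁ b = -((f₁ y - f₁ x) + (f₁ b - f₁ y)) := by ring
      rw [this, hξeq, hηeq]
    have hfy : f₁ y - f₁ b = -(q₂ * B) := by rw [← hηeq]; ring
    have h1 : f₂ x - f₂ b = -(A + B) := by rw [hA, hB]; ring
    have h2 : f₂ y - f₂ b = -B := by rw [hB]; ring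
    simp only
    rw [hfx, hfy, h1, h2, neg_div_neg_eq, neg_div_neg_eq]
    have hB0 : B ≠ 0 := by rintro h; rw [h] at hAB; simp at hAB
    rw [mul_div_assoc, div_self hB0, mul_one]
    have : q₂ - (q₁ * A + q₂ * B) / (A + B) = (q₂ - q₁) * (A / (A + B)) := by
      field_simp
      ring
    nlinarith [this]
end

section
/- Let n > 2, r ≠ 0, 1, and define p(x) = (((n-1)x^{1/r} + (1-(n-1)x)^{1/r})/n)^r on (0, 1/(n-1)). Then p'(x) = (n-1)(x^{1/r - 1} - (1-(n-1)x)^{1/r - 1}) / ((n-1)x^{1/r} + (1-(n-1)x)^{1/r}) · p(x), and the sign of p''(x) on (0, 1/(n-1)) equals the opposite of the sign of r/(r-1). -/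
set_option maxHeartbeats 1000000

theorem stmt_10 (n : ℕ) (hn : 2 < n) (r : ℝ) (hr0 : r ≠ 0) (hr1 : r ≠ 1) :
    ∀ x ∈ Set.Ioo (0 : ℝ) (1 / (n - 1)),
      (let p : ℝ → ℝ := fun x =>
        (((n - 1) * x ^ (1 / r) + (1 - (n - 1) * x) ^ (1 / r)) / n) ^ r;
       let p' : ℝ → ℝ := fun x =>
        (n - 1) * (x ^ (1 / r - 1) - (1 - (n - 1) * x) ^ (1 / r - 1)) /
          ((n - 1) * x ^ (1 / r) + (1 - (n - 1) * x) ^ (1 / r)) * p x;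
       let p'' : ℝ → ℝ := fun x =>
        -((n - 1) * (r - 1) * x ^ (1 / r - 2) * (1 - (n - 1) * x) ^ (1 / r - 2) * p x) /
          (r * ((n - 1) * x ^ (1 / r) + (1 - (n - 1) * x) ^ (1 / r)) ^ 2);
       HasDerivAt p (p' x) x ∧
       HasDerivAt p' (p'' x) x ∧
       Real.sign (p'' x) = -Real.sign (r / (r - 1))) := by
  intro x hx
  obtain ⟨hx0, hx1⟩ := hx
  have hn3 : (3 : ℝ) ≤ (n : ℝ) := by exact_mod_cast hn
  have hN0 : (0 : ℝ) < (n : ℝ) - 1 := by linarith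
  have hnne : (n : ℝ) ≠ 0 := by linarith
  have hy0 : (0 : ℝ) < 1 - ((n : ℝ) - 1) * x := by
    have := (lt_div_iff₀ hN0).mp hx1
    linarith
  have ha0 : 0 < x ^ (1 / r) := Real.rpow_pos_of_pos hx0 _
  have hb0 : 0 < (1 - ((n : ℝ) - 1) * x) ^ (1 / r) := Real.rpow_pos_of_pos hy0 _
  have hu0 : 0 < ((n : ℝ) - 1) * x ^ (1 / r) + (1 - ((n : ℝ) - 1) * x) ^ (1 / r) := by positivity
  have hs0 : 0 < (((n : ℝ) - 1) * x ^ (1 / r) + (1 - ((n : ℝ) - 1) * x) ^ (1 / r)) / n := by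
    positivity
  -- basic rpow rewrites
  have hA : x ^ (1 / r - 1) = x ^ (1 / r) / x := Real.rpow_sub_one hx0.ne' _
  have hB : (1 - ((n : ℝ) - 1) * x) ^ (1 / r - 1)
      = (1 - ((n : ℝ) - 1) * x) ^ (1 / r) / (1 - ((n : ℝ) - 1) * x) :=
    Real.rpow_sub_one hy0.ne' _
  have hC : x ^ (1 / r - 2) = x ^ (1 / r) / x ^ 2 := by
    rw [Real.rpow_sub hx0, Real.rpow_two]
  have hD : (1 - ((n : ℝ) - 1) * x) ^ (1 / r - 2)
      = (1 - ((n : ℝ) - 1) * x) ^ (1 / r) / (1 - ((n : ℝ) - 1) * x) ^ 2 := by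
    rw [Real.rpow_sub hy0, Real.rpow_two]
  have hP1 : ((((n : ℝ) - 1) * x ^ (1 / r) + (1 - ((n : ℝ) - 1) * x) ^ (1 / r)) / n) ^ (r - 1)
      = ((((n : ℝ) - 1) * x ^ (1 / r) + (1 - ((n : ℝ) - 1) * x) ^ (1 / r)) / n) ^ r /
        ((((n : ℝ) - 1) * x ^ (1 / r) + (1 - ((n : ℝ) - 1) * x) ^ (1 / r)) / n) :=
    Real.rpow_sub_one hs0.ne' _
  -- derivatives of pieces
  have ha : HasDerivAt (fun t : ℝ => t ^ (1 / r)) (1 / r * x ^ (1 / r - 1)) x :=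
    Real.hasDerivAt_rpow_const (Or.inl hx0.ne')
  have hlin : HasDerivAt (fun t : ℝ => 1 - ((n : ℝ) - 1) * t) (-((n : ℝ) - 1)) x := by
    simpa using ((hasDerivAt_id x).const_mul ((n : ℝ) - 1)).const_sub 1
  have hb : HasDerivAt (fun t : ℝ => (1 - ((n : ℝ) - 1) * t) ^ (1 / r))
      (-((n : ℝ) - 1) * (1 / r) * (1 - ((n : ℝ) - 1) * x) ^ (1 / r - 1)) x :=
    hlin.rpow_const (Or.inl hy0.ne')
  have hu : HasDerivAt
      (fun t : ℝ => ((n : ℝ) - 1) * t ^ (1 / r) + (1 - ((n : ℝ) - 1) * t) ^ (1 / r))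
      (((n : ℝ) - 1) * (1 / r * x ^ (1 / r - 1)) +
        -((n : ℝ) - 1) * (1 / r) * (1 - ((n : ℝ) - 1) * x) ^ (1 / r - 1)) x :=
    (ha.const_mul _).add hb
  have hs : HasDerivAt
      (fun t : ℝ => (((n : ℝ) - 1) * t ^ (1 / r) + (1 - ((n : ℝ) - 1) * t) ^ (1 / r)) / n)
      ((((n : ℝ) - 1) * (1 / r * x ^ (1 / r - 1)) +
        -((n : ℝ) - 1) * (1 / r) * (1 - ((n : ℝ) - 1) * x) ^ (1 / r - 1)) / n) x :=
    hu.div_const _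
  have hp : HasDerivAt
      (fun t : ℝ => ((((n : ℝ) - 1) * t ^ (1 / r) + (1 - ((n : ℝ) - 1) * t) ^ (1 / r)) / n) ^ r)
      (((((n : ℝ) - 1) * (1 / r * x ^ (1 / r - 1)) +
        -((n : ℝ) - 1) * (1 / r) * (1 - ((n : ℝ) - 1) * x) ^ (1 / r - 1)) / n) * r *
        ((((n : ℝ) - 1) * x ^ (1 / r) + (1 - ((n : ℝ) - 1) * x) ^ (1 / r)) / n) ^ (r - 1)) x :=
    hs.rpow_const (Or.inl hs0.ne')
  dsimp only
  set a : ℝ := x ^ (1 / r) with ha_def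
  set b : ℝ := (1 - ((n : ℝ) - 1) * x) ^ (1 / r) with hb_def
  set u : ℝ := ((n : ℝ) - 1) * a + b with hu_def
  set P : ℝ := (u / n) ^ r with hP_def
  refine ⟨?_, ?_, ?_⟩
  · convert hp using 1
    rw [hA, hB, hP1]
    field_simp
    ring
  · have hA' : HasDerivAt (fun t : ℝ => t ^ (1 / r - 1)) ((1 / r - 1) * x ^ (1 / r - 1 - 1)) x :=
      Real.hasDerivAt_rpow_const (Or.inl hx0.ne')
    have hB' : HasDerivAt (fun t : ℝ => (1 - ((n : ℝ) - 1) * t) ^ (1 / r - 1))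
        (-((n : ℝ) - 1) * (1 / r - 1) * (1 - ((n : ℝ) - 1) * x) ^ (1 / r - 1 - 1)) x :=
      hlin.rpow_const (Or.inl hy0.ne')
    have hnum := (hA'.sub hB').const_mul ((n : ℝ) - 1)
    have hfrac := hnum.div hu hu0.ne'
    have hfull := hfrac.mul hp
    refine hfull.congr_deriv ?_
    simp only [Pi.sub_apply, Pi.div_apply]
    rw [show (1 / r - 1 - 1 : ℝ) = 1 / r - 2 by ring, hA, hB, hC, hD, hP1]
    rw [← ha_def, ← hb_def, ← hu_def]
    field_simp
    ring
  · have hCpos : 0 < x ^ (1 / r - 2) := Real.rpow_pos_of_pos hx0 _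
    have hDpos : 0 < (1 - ((n : ℝ) - 1) * x) ^ (1 / r - 2) := Real.rpow_pos_of_pos hy0 _
    have hPpos : 0 < ((((n : ℝ) - 1) * x ^ (1 / r) + (1 - ((n : ℝ) - 1) * x) ^ (1 / r)) / n) ^ r :=
      Real.rpow_pos_of_pos hs0 _
    have hK : 0 < ((n : ℝ) - 1) * x ^ (1 / r - 2) * (1 - ((n : ℝ) - 1) * x) ^ (1 / r - 2) *
        ((((n : ℝ) - 1) * x ^ (1 / r) + (1 - ((n : ℝ) - 1) * x) ^ (1 / r)) / n) ^ r /
        (((n : ℝ) - 1) * x ^ (1 / r) + (1 - ((n : ℝ) - 1) * x) ^ (1 / r)) ^ 2 := by positivity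
    have hval : -(((n : ℝ) - 1) * (r - 1) * x ^ (1 / r - 2) * (1 - ((n : ℝ) - 1) * x) ^ (1 / r - 2) *
        ((((n : ℝ) - 1) * x ^ (1 / r) + (1 - ((n : ℝ) - 1) * x) ^ (1 / r)) / n) ^ r) /
        (r * (((n : ℝ) - 1) * x ^ (1 / r) + (1 - ((n : ℝ) - 1) * x) ^ (1 / r)) ^ 2)
        = (1 - r) / r * (((n : ℝ) - 1) * x ^ (1 / r - 2) * (1 - ((n : ℝ) - 1) * x) ^ (1 / r - 2) *
        ((((n : ℝ) - 1) * x ^ (1 / r) + (1 - ((n : ℝ) - 1) * x) ^ (1 / r)) / n) ^ r /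
        (((n : ℝ) - 1) * x ^ (1 / r) + (1 - ((n : ℝ) - 1) * x) ^ (1 / r)) ^ 2) := by
      field_simp
      ring
    rw [hval]
    rcases lt_or_gt_of_ne (div_ne_zero hr0 (sub_ne_zero.mpr hr1)) with h | h
    · have h1 : 0 < (1 - r) / r := by
        rcases div_neg_iff.mp h with ⟨h1, h2⟩ | ⟨h1, h2⟩
        · exact div_pos (by linarith) h1
        · linarith
      rw [Real.sign_of_neg h, Real.sign_of_pos (mul_pos h1 hK)]
      norm_num
    · have h1 : (1 - r) / r < 0 := by
        rcases div_pos_iff.mp h with ⟨h1, h2⟩ | ⟨h1, h2⟩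
        · exact div_neg_of_neg_of_pos (by linarith) h1
        · exact div_neg_of_pos_of_neg (by linarith) h1
      rw [Real.sign_of_pos h, Real.sign_of_neg (mul_neg_of_neg_of_pos h1 hK)]
end

section
/- For 1/2 < α < 1 and s > 0, the function h(s) = s^{1-2α} + 2α s^{1-α} - 2α s^{-α} - s^{1-α} + s^{-α} - 1 is increasing on (0, ∞); since h(1) = 0, h(s) < 0 for 0 < s < 1 and h(s) > 0 for s > 1. -/
open Real Set

theorem stmt_11 (α : ℝ) (hα1 : 1 / 2 < α) (hα2 : α < 1) :
    (let h : ℝ → ℝ := fun s =>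
      s ^ (1 - 2 * α) + 2 * α * s ^ (1 - α) - 2 * α * s ^ (-α) -
        s ^ (1 - α) + s ^ (-α) - 1;
     StrictMonoOn h (Set.Ioi (0 : ℝ)) ∧ h 1 = 0 ∧
     (∀ s : ℝ, 0 < s → s < 1 → h s < 0) ∧
     (∀ s : ℝ, 1 < s → 0 < h s)) := by
  intro h
  -- derivative
  have hderiv : ∀ x : ℝ, 0 < x → HasDerivAt h
      ((2 * α - 1) * (x ^ (-α - 1) * ((1 - α) * x + α - x ^ (1 - α)))) x := by
    intro x hx
    have hx' : x ≠ 0 := hx.ne'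
    have d1 := Real.hasDerivAt_rpow_const (p := 1 - 2 * α) (Or.inl hx')
    have d2 := Real.hasDerivAt_rpow_const (p := 1 - α) (Or.inl hx')
    have d3 := Real.hasDerivAt_rpow_const (p := -α) (Or.inl hx')
    have D : HasDerivAt h
        ((1 - 2 * α) * x ^ (1 - 2 * α - 1) +
          2 * α * ((1 - α) * x ^ (1 - α - 1)) -
          2 * α * (-α * x ^ (-α - 1)) -
          (1 - α) * x ^ (1 - α - 1) + -α * x ^ (-α - 1) - 0) x :=
      ((((d1.add (d2.const_mul (2 * α))).sub (d3.const_mul (2 * α))).sub d2).add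
        d3).sub (hasDerivAt_const x 1)
    convert D using 1
    have e1 : x ^ (1 - 2 * α - 1) = x ^ (-α - 1) * x ^ (1 - α) := by
      rw [← Real.rpow_add hx]; ring_nf
    have e2 : x ^ (1 - α - 1) = x ^ (-α - 1) * x := by
      rw [show (1 - α - 1) = -α - 1 + 1 by ring, Real.rpow_add hx, Real.rpow_one]
    rw [e1, e2]; ring
  -- positivity of the bracket for x ≠ 1
  have hbr : ∀ x : ℝ, 0 < x → x ≠ 1 → 0 < (1 - α) * x + α - x ^ (1 - α) := by
    intro x hx hx1
    have hs : -1 ≤ x - 1 := by linarith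
    have hs' : x - 1 ≠ 0 := sub_ne_zero.mpr hx1
    have := rpow_one_add_lt_one_add_mul_self hs hs' (p := 1 - α)
      (by linarith) (by linarith)
    have hq : (1 : ℝ) + (x - 1) = x := by ring
    rw [hq] at this
    nlinarith [this]
  have h2α : 0 < 2 * α - 1 := by linarith
  have hpos : ∀ x ∈ interior (Set.Ioi (0 : ℝ)) \ {1}, 0 < deriv h x := by
    intro x hx
    rw [interior_Ioi] at hx
    obtain ⟨hx0, hx1⟩ := hx
    have hx0 : (0 : ℝ) < x := hx0
    rw [(hderiv x hx0).deriv]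
    have := hbr x hx0 (by simpa using hx1)
    have hp : (0 : ℝ) < x ^ (-α - 1) := Real.rpow_pos_of_pos hx0 _
    positivity
  -- StrictMonoOn via two pieces glued
  have cont : ContinuousOn h (Set.Ioi (0 : ℝ)) := by
    intro x hx
    exact ((hderiv x hx).continuousAt).continuousWithinAt
  have mono1 : StrictMonoOn h (Set.Ioc (0 : ℝ) 1) := by
    apply strictMonoOn_of_deriv_pos (convex_Ioc 0 1)
      (cont.mono (fun x hx => Set.mem_Ioi.mpr hx.1))
    intro x hx
    rw [interior_Ioc] at hx
    exact hpos x ⟨by rw [interior_Ioi]; exact Set.mem_Ioi.mpr hx.1, by simp [hx.2.ne]⟩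
  have mono2 : StrictMonoOn h (Set.Ici (1 : ℝ)) := by
    apply strictMonoOn_of_deriv_pos (convex_Ici 1)
      (cont.mono (fun x hx => Set.mem_Ioi.mpr (lt_of_lt_of_le one_pos hx)))
    intro x hx
    rw [interior_Ici] at hx
    exact hpos x ⟨by rw [interior_Ioi]; exact Set.mem_Ioi.mpr (by linarith [Set.mem_Ioi.mp hx]),
      by simp [(Set.mem_Ioi.mp hx).ne']⟩
  have mono : StrictMonoOn h (Set.Ioi (0 : ℝ)) := by
    intro x hx y hy hxy
    rcases le_or_gt y 1 with hy1 | hy1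
    · exact mono1 ⟨hx, hxy.le.trans hy1⟩ ⟨hy, hy1⟩ hxy
    · rcases le_or_gt x 1 with hx1 | hx1
      · rcases eq_or_lt_of_le hx1 with rfl | hx1'
        · exact mono2 (Set.mem_Ici.mpr (le_refl _)) hy1.le hxy
        · calc h x < h 1 := mono1 ⟨hx, hx1⟩ ⟨one_pos, le_refl _⟩ hx1'
            _ < h y := mono2 (Set.mem_Ici.mpr (le_refl _)) hy1.le hy1
      · exact mono2 hx1.le (hx1.trans hxy).le hxy
  have h1 : h 1 = 0 := by simp [h]
  refine ⟨mono, h1, ?_, ?_⟩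
  · intro s hs0 hs1
    have := mono (mem_Ioi.mpr hs0) (mem_Ioi.mpr one_pos) hs1
    rwa [h1] at this
  · intro s hs
    have := mono (mem_Ioi.mpr one_pos) (mem_Ioi.mpr (one_pos.trans hs)) hs
    rwa [h1] at this
end

section
/- Let n ≥ 2 and α > 1. If x₁ = 0 and x₂,...,xₙ are positive reals, then n^{1/α - 1} ≤ A_n/P_α ≤ (n/(n-1))^{1/α - 1}. -/
theorem stmt_15 (n : ℕ) (hn : 2 ≤ n) (α : ℝ) (hα : 1 < α)
    (x : Fin n → ℝ) (h0 : x ⟨0, by omega⟩ = 0) (hpos : ∀ i : Fin n, (i : ℕ) ≠ 0 → 0 < x i) :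
    (let A := (∑ i, x i) / n
     let P := ((∑ i, x i ^ α) / n) ^ (1 / α)
     (n : ℝ) ^ (1 / α - 1) ≤ A / P ∧ A / P ≤ ((n : ℝ) / (n - 1)) ^ (1 / α - 1)) := by
  intro A P
  have hα0 : (0:ℝ) < α := by linarith
  have hαne : α ≠ 0 := ne_of_gt hα0
  have hxnn : ∀ i : Fin n, 0 ≤ x i := by
    intro i
    rcases eq_or_ne (i : ℕ) 0 with h | h
    · have : i = ⟨0, by omega⟩ := by ext; simp [h]
      rw [this, h0]
    · exact (hpos i h).le
  set S := ∑ i, x i with hSdef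
  set Q := ∑ i, x i ^ α with hQdef
  have hQnn : ∀ i : Fin n, 0 ≤ x i ^ α := fun i => Real.rpow_nonneg (hxnn i) α
  have hone : (⟨1, by omega⟩ : Fin n) ≠ ⟨0, by omega⟩ := by
    intro h; simpa using congrArg Fin.val h
  have hx1 : 0 < x ⟨1, by omega⟩ := hpos _ (by simp)
  have hSpos : 0 < S := by
    calc (0:ℝ) = ∑ _i : Fin n, 0 := by simp
    _ < S := by
      refine Finset.sum_lt_sum (fun i _ => hxnn i) ?_
      exact ⟨⟨1, by omega⟩, Finset.mem_univ _, hx1⟩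
  have hQpos : 0 < Q := by
    calc (0:ℝ) = ∑ _i : Fin n, 0 := by simp
    _ < Q := by
      refine Finset.sum_lt_sum (fun i _ => hQnn i) ?_
      exact ⟨⟨1, by omega⟩, Finset.mem_univ _, Real.rpow_pos_of_pos hx1 α⟩
  have hn0 : (0:ℝ) < n := by positivity
  have hm0 : (0:ℝ) < (n:ℝ) - 1 := by
    have : (2:ℝ) ≤ n := by exact_mod_cast hn
    linarith
  set c := Q ^ (1/α) with hcdef
  have hcpos : 0 < c := Real.rpow_pos_of_pos hQpos _
  have hP : P = c / (n:ℝ) ^ (1/α) := by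
    simp only [P, hcdef]
    rw [Real.div_rpow hQpos.le hn0.le]
  have hPpos : 0 < P := by rw [hP]; positivity
  -- Key fact 1 : Q ≤ S ^ α
  have key1 : Q ≤ S ^ α := by
    have step : ∀ i : Fin n, x i ^ α ≤ x i * S ^ (α - 1) := by
      intro i
      have hxiS : x i ≤ S := Finset.single_le_sum (fun j _ => hxnn j) (Finset.mem_univ i)
      calc x i ^ α = x i ^ (1 + (α - 1)) := by ring_nf
      _ = x i * x i ^ (α - 1) := by
          rw [Real.rpow_add' (hxnn i) (by linarith), Real.rpow_one]
      _ ≤ x i * S ^ (α - 1) := by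
          exact mul_le_mul_of_nonneg_left
            (Real.rpow_le_rpow (hxnn i) hxiS (by linarith)) (hxnn i)
    calc Q ≤ ∑ i, x i * S ^ (α - 1) := Finset.sum_le_sum fun i _ => step i
    _ = S * S ^ (α - 1) := by rw [← Finset.sum_mul]
    _ = S ^ (1 + (α - 1)) := by
        rw [Real.rpow_add hSpos, Real.rpow_one]
    _ = S ^ α := by ring_nf
  -- Key fact 2 : S ^ α ≤ (n-1) ^ (α - 1) * Q
  have key2 : S ^ α ≤ ((n:ℝ) - 1) ^ (α - 1) * Q := by
    set t : Finset (Fin n) := Finset.univ \ {⟨0, by omega⟩} with htdef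
    have hcard : (t.card : ℝ) = (n:ℝ) - 1 := by
      have : t.card = n - 1 := by
        rw [htdef, Finset.card_sdiff_of_subset (by simp)]
        simp
      rw [this]
      have : (1:ℕ) ≤ n := by omega
      push_cast [Nat.cast_sub this]
      ring
    have hsum1 : ∑ i ∈ t, x i = S := by
      rw [htdef, Finset.sum_sdiff_eq_sub (by simp)]
      simp [h0, hSdef]
    have hsum2 : ∑ i ∈ t, x i ^ α = Q := by
      rw [htdef, Finset.sum_sdiff_eq_sub (by simp)]
      simp [h0, Real.zero_rpow hαne, hQdef]
    have := Real.rpow_sum_le_const_mul_sum_rpow_of_nonneg t (f := x) hα.le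
      (fun i _ => hxnn i)
    rwa [hsum1, hsum2, hcard] at this
  -- From key1 : c ≤ S
  have hcS : c ≤ S := by
    have := Real.rpow_le_rpow hQpos.le key1 (by positivity : (0:ℝ) ≤ 1/α)
    rwa [← Real.rpow_mul hSpos.le, mul_one_div,
      div_self hαne, Real.rpow_one] at this
  -- From key2 : S ≤ (n-1)^(1 - 1/α) * c
  have hSc : S ≤ ((n:ℝ) - 1) ^ (1 - 1/α) * c := by
    have h := Real.rpow_le_rpow (by positivity) key2 (by positivity : (0:ℝ) ≤ 1/α)
    rwa [← Real.rpow_mul hSpos.le, mul_one_div, div_self hαne, Real.rpow_one,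
      Real.mul_rpow (by positivity) hQpos.le, ← Real.rpow_mul hm0.le,
      show (α - 1) * (1/α) = 1 - 1/α by field_simp] at h
  have hnne : ((n:ℝ) ^ (1/α)) ≠ 0 := by positivity
  have hnne' : (n:ℝ) ≠ 0 := ne_of_gt hn0
  have hmne : (((n:ℝ) - 1) ^ (1/α)) ≠ 0 := by positivity
  have hmne' : ((n:ℝ) - 1) ≠ 0 := ne_of_gt hm0
  constructor
  · -- lower bound
    rw [le_div_iff₀ hPpos, hP, Real.rpow_sub hn0, Real.rpow_one]
    have heq : (n:ℝ) ^ (1/α) / n * (c / (n:ℝ) ^ (1/α)) = c / n := by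
      field_simp
    rw [heq]
    show c / (n:ℝ) ≤ S / (n:ℝ)
    gcongr
  · -- upper bound
    rw [div_le_iff₀ hPpos, hP, Real.div_rpow hn0.le hm0.le, Real.rpow_sub hn0,
      Real.rpow_one, Real.rpow_sub hm0, Real.rpow_one]
    have heq : (n:ℝ) ^ (1/α) / n / (((n:ℝ) - 1) ^ (1/α) / ((n:ℝ) - 1))
        * (c / (n:ℝ) ^ (1/α)) = ((n:ℝ) - 1) ^ (1 - 1/α) * c / n := by
      rw [Real.rpow_sub hm0, Real.rpow_one]
      field_simp
    rw [heq]
    show S / (n:ℝ) ≤ _ / (n:ℝ)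
    gcongr
end

section
/- Let n ≥ 2, α real, α ≠ 0, α < 1, and let x₁,...,xₙ be positive reals, not all equal, with geometric mean G_n. Define h(x₁,...,xₙ) = (A_n - G_n)/(P_α - G_n). Then h(x₁,...,xₙ, G_n) ≥ h(x₁,...,xₙ), i.e., appending the geometric mean as an (n+1)-st variable does not decrease the ratio. -/
open Finset NNReal

private lemma convex_rpow2 {w₁ w₂ a b p : ℝ} (hw₁ : 0 ≤ w₁) (hw₂ : 0 ≤ w₂)
    (hw : w₁ + w₂ = 1) (ha : 0 ≤ a) (hb : 0 ≤ b) (hp : 1 ≤ p) :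
    (w₁ * a + w₂ * b) ^ p ≤ w₁ * a ^ p + w₂ * b ^ p := by
  lift w₁ to ℝ≥0 using hw₁
  lift w₂ to ℝ≥0 using hw₂
  lift a to ℝ≥0 using ha
  lift b to ℝ≥0 using hb
  have hw' : w₁ + w₂ = 1 := by exact_mod_cast hw
  exact_mod_cast NNReal.rpow_arith_mean_le_arith_mean2_rpow w₁ w₂ a b hw' hp

private lemma powmean2 {u v α w₁ w₂ : ℝ} (hu : 0 < u) (hv : 0 < v) (hα0 : α ≠ 0) (hα1 : α < 1)
    (hw₁ : 0 ≤ w₁) (hw₂ : 0 ≤ w₂) (hw : w₁ + w₂ = 1) :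
    (w₁ * u ^ α + w₂ * v ^ α) ^ (1 / α) ≤ w₁ * u + w₂ * v := by
  have hm : 0 < w₁ * u + w₂ * v := by
    nlinarith [lt_min hu hv, min_le_left u v, min_le_right u v,
      mul_nonneg hw₁ (sub_nonneg.2 (min_le_left u v)),
      mul_nonneg hw₂ (sub_nonneg.2 (min_le_right u v))]
  rcases hα0.lt_or_gt with hneg | hposα
  · have hgm : u ^ w₁ * v ^ w₂ ≤ w₁ * u + w₂ * v :=
      Real.geom_mean_le_arith_mean2_weighted hw₁ hw₂ hu.le hv.le hw
    have hgmpos : 0 < u ^ w₁ * v ^ w₂ := by positivity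
    have h1 : (w₁ * u + w₂ * v) ^ α ≤ (u ^ w₁ * v ^ w₂) ^ α :=
      Real.rpow_le_rpow_of_nonpos hgmpos hgm hneg.le
    have h2 : (u ^ w₁ * v ^ w₂) ^ α = (u ^ α) ^ w₁ * (v ^ α) ^ w₂ := by
      rw [Real.mul_rpow (by positivity) (by positivity), ← Real.rpow_mul hu.le,
        ← Real.rpow_mul hv.le, mul_comm w₁ α, mul_comm w₂ α,
        Real.rpow_mul hu.le, Real.rpow_mul hv.le]
    have h3 : (u ^ α) ^ w₁ * (v ^ α) ^ w₂ ≤ w₁ * u ^ α + w₂ * v ^ α :=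
      Real.geom_mean_le_arith_mean2_weighted hw₁ hw₂ (Real.rpow_nonneg hu.le α)
        (Real.rpow_nonneg hv.le α) hw
    have h4 : (w₁ * u + w₂ * v) ^ α ≤ w₁ * u ^ α + w₂ * v ^ α := by
      calc (w₁ * u + w₂ * v) ^ α ≤ (u ^ w₁ * v ^ w₂) ^ α := h1
        _ = (u ^ α) ^ w₁ * (v ^ α) ^ w₂ := h2
        _ ≤ w₁ * u ^ α + w₂ * v ^ α := h3
    have h5 := Real.rpow_le_rpow_of_nonpos (by positivity) h4
      (le_of_lt (div_neg_of_pos_of_neg one_pos hneg))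
    rwa [← Real.rpow_mul hm.le, mul_one_div_cancel hα0, Real.rpow_one] at h5
  · have hp : 1 ≤ 1 / α := by rw [le_div_iff₀ hposα]; linarith
    have h := convex_rpow2 hw₁ hw₂ hw (Real.rpow_nonneg hu.le α)
      (Real.rpow_nonneg hv.le α) hp
    rwa [← Real.rpow_mul hu.le, ← Real.rpow_mul hv.le, mul_one_div_cancel hα0,
      Real.rpow_one, Real.rpow_one] at h

private lemma amgm {n : ℕ} (hn : 0 < n) (y : Fin n → ℝ) (hpos : ∀ i, 0 < y i) :
    (∏ i, y i) ^ ((1 : ℝ) / n) ≤ (∑ i, y i) / n := by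
  have hnR : (0 : ℝ) < n := Nat.cast_pos.mpr hn
  have h := Real.geom_mean_le_arith_mean_weighted univ (fun _ => 1 / (n : ℝ)) y
    (fun i _ => by positivity) (by simp [Finset.sum_const, Finset.card_univ]; field_simp)
    (fun i _ => (hpos i).le)
  calc (∏ i, y i) ^ ((1 : ℝ) / n) = ∏ i, y i ^ ((1 : ℝ) / n) :=
        (Real.finset_prod_rpow univ y (fun i _ => (hpos i).le) _).symm
    _ ≤ ∑ i, (1 / (n : ℝ)) * y i := h
    _ = (∑ i, y i) / n := by rw [← Finset.mul_sum]; ring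

set_option maxHeartbeats 1000000 in
theorem stmt_17 (n : ℕ) (hn : 2 ≤ n) (α : ℝ) (hα0 : α ≠ 0) (hα1 : α < 1)
    (x : Fin n → ℝ) (hpos : ∀ i, 0 < x i) (hne : ¬ ∀ i j, x i = x j) :
    (let A := (∑ i, x i) / n
     let G := (∏ i, x i) ^ ((1 : ℝ) / n)
     let P := ((∑ i, x i ^ α) / n) ^ (1 / α)
     ((n * A + G) / (n + 1) - G) / (((n * P ^ α + G ^ α) / (n + 1)) ^ (1 / α) - G) ≥
       (A - G) / (P - G)) := by
  have hn0 : 0 < n := by omega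
  have hnR : (0 : ℝ) < n := by exact_mod_cast hn0
  have hn1 : (0 : ℝ) < (n : ℝ) + 1 := by linarith
  dsimp only
  set A : ℝ := (∑ i, x i) / (n : ℝ) with hAdef
  set G : ℝ := (∏ i, x i) ^ ((1 : ℝ) / n) with hGdef
  set P : ℝ := ((∑ i, x i ^ α) / n) ^ (1 / α) with hPdef
  have hprod : 0 < ∏ i, x i := Finset.prod_pos fun i _ => hpos i
  have hG : 0 < G := by rw [hGdef]; positivity
  have hsumα : 0 < ∑ i, x i ^ α :=
    Finset.sum_pos (fun i _ => Real.rpow_pos_of_pos (hpos i) α) ⟨⟨0, hn0⟩, mem_univ _⟩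
  have hP : 0 < P := by rw [hPdef]; positivity
  have hPα0 : 0 < P ^ α := Real.rpow_pos_of_pos hP α
  have hGα0 : 0 < G ^ α := Real.rpow_pos_of_pos hG α
  have hPα : P ^ α = (∑ i, x i ^ α) / n := by
    rw [hPdef, ← Real.rpow_mul (by positivity), one_div_mul_cancel hα0, Real.rpow_one]
  have hAG : G ≤ A := amgm hn0 x hpos
  have hprodα : (∏ i, x i ^ α) = (∏ i, x i) ^ α :=
    Real.finset_prod_rpow univ x (fun i _ => (hpos i).le) α
  have hGα : G ^ α ≤ P ^ α := by
    calc G ^ α = (∏ i, x i) ^ ((1 : ℝ) / n * α) := by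
          rw [hGdef, ← Real.rpow_mul hprod.le]
      _ = (∏ i, x i ^ α) ^ ((1 : ℝ) / n) := by
          rw [hprodα, ← Real.rpow_mul hprod.le, mul_comm]
      _ ≤ (∑ i, x i ^ α) / n :=
          amgm hn0 _ (fun i => Real.rpow_pos_of_pos (hpos i) α)
      _ = P ^ α := hPα.symm
  have hkey : (((n : ℝ) * P ^ α + G ^ α) / (n + 1)) ^ (1 / α) ≤ ((n : ℝ) * P + G) / (n + 1) := by
    have hw : (n : ℝ) / (n + 1) + 1 / (n + 1) = 1 := by field_simp
    have h := powmean2 hP hG hα0 hα1 (by positivity) (by positivity) hw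
    have e1 : (n : ℝ) / (n + 1) * P ^ α + 1 / (n + 1) * G ^ α = ((n : ℝ) * P ^ α + G ^ α) / (n + 1) := by
      ring
    have e2 : (n : ℝ) / (n + 1) * P + 1 / (n + 1) * G = ((n : ℝ) * P + G) / (n + 1) := by ring
    rwa [e1, e2] at h
  set M : ℝ := (((n : ℝ) * P ^ α + G ^ α) / ((n : ℝ) + 1)) ^ (1 / α) with hMdef
  have hbase : 0 < ((n : ℝ) * P ^ α + G ^ α) / ((n : ℝ) + 1) := by
    apply div_pos _ hn1; nlinarith
  have hnum : ((n : ℝ) * A + G) / (n + 1) - G = (n : ℝ) * (A - G) / (n + 1) := by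
    field_simp; ring
  rcases eq_or_lt_of_le hAG with hEq | hlt
  · rw [ge_iff_le, hnum, ← hEq, sub_self, mul_zero, zero_div, zero_div, zero_div]
  · rcases eq_or_lt_of_le hGα with hPGα | hPGα
    · have h1 : (G ^ α) ^ (1 / α) = G := by
        rw [← Real.rpow_mul hG.le, mul_one_div_cancel hα0, Real.rpow_one]
      have h2 : (P ^ α) ^ (1 / α) = P := by
        rw [← Real.rpow_mul hP.le, mul_one_div_cancel hα0, Real.rpow_one]
      have hPG : P = G := by rw [← h2, ← hPGα, h1]
      have hM : M = G := by
        have e : ((n : ℝ) * G ^ α + G ^ α) / ((n : ℝ) + 1) = G ^ α := by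
          field_simp
        rw [hMdef, hPG, e, h1]
      rw [ge_iff_le, hM, hPG, sub_self, div_zero, div_zero]
    · have hMα : G ^ α < ((n : ℝ) * P ^ α + G ^ α) / ((n : ℝ) + 1) := by
        rw [lt_div_iff₀ hn1]
        nlinarith [mul_lt_mul_of_pos_left hPGα hnR]
      have hkey' : M * ((n : ℝ) + 1) ≤ (n : ℝ) * P + G := by
        rw [← le_div_iff₀ hn1]; exact hkey
      rcases hα0.lt_or_gt with hneg | hposα
      · -- α < 0 : P < G, M < G
        have hPG : P < G := by
          rwa [Real.rpow_lt_rpow_iff_of_neg hG hP hneg] at hPGα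
        have hM : M < G := by
          have h1 : (((n : ℝ) * P ^ α + G ^ α) / ((n : ℝ) + 1)) ^ (1 / α) < (G ^ α) ^ (1 / α) :=
            Real.rpow_lt_rpow_of_neg hGα0 hMα (by
              rw [div_neg_iff]; left; exact ⟨one_pos, hneg⟩)
          rwa [← Real.rpow_mul hG.le, mul_one_div_cancel hα0, Real.rpow_one] at h1
        rw [ge_iff_le, hnum]
        have e3 : (A - G) / (P - G) = -((A - G) / (G - P)) := by
          rw [← div_neg, neg_sub]
        have e4 : (n : ℝ) * (A - G) / (n + 1) / (M - G) = -((n : ℝ) * (A - G) / (n + 1) / (G - M)) := by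
          rw [← div_neg, neg_sub]
        rw [e3, e4, neg_le_neg_iff, div_le_div_iff₀ (by linarith) (by linarith)]
        rw [div_mul_eq_mul_div, div_le_iff₀ hn1]
        nlinarith [mul_nonneg (sub_pos.mpr hlt).le
          (by linarith : (0 : ℝ) ≤ (n : ℝ) * P + G - M * ((n : ℝ) + 1))]
      · -- 0 < α : G < P, G < M
        have hPG : G < P := by
          rwa [Real.rpow_lt_rpow_iff hG.le hP.le hposα] at hPGα
        have hM : G < M := by
          have h1 : (G ^ α) ^ (1 / α) < (((n : ℝ) * P ^ α + G ^ α) / ((n : ℝ) + 1)) ^ (1 / α) :=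
            Real.rpow_lt_rpow hGα0.le hMα (by positivity)
          rwa [← Real.rpow_mul hG.le, mul_one_div_cancel hα0, Real.rpow_one] at h1
        rw [ge_iff_le, hnum, div_le_div_iff₀ (by linarith) (by linarith)]
        rw [div_mul_eq_mul_div, le_div_iff₀ hn1]
        nlinarith [mul_nonneg (sub_pos.mpr hlt).le
          (by linarith : (0 : ℝ) ≤ (n : ℝ) * P + G - M * ((n : ℝ) + 1))]
end

section
/- For n ≥ 2 let x₁ = ... = x_{n-1} = 1 and xₙ = 1/n. Then for the harmonic, geometric, and arithmetic means of this n-tuple: A_n = 1 - 1/n + 1/n², G_n = n^{-1/n}, H_n = n/(2n-1), and (A_n - G_n)/(H_n - G_n) → 0 as n → ∞. -/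
open Filter

theorem stmt_19 :
    (∀ n : ℕ, 2 ≤ n →
      (let x : Fin n → ℝ := fun i => if (i : ℕ) < n - 1 then 1 else 1 / n
       (∑ i, x i) / n = 1 - 1 / n + 1 / (n : ℝ) ^ 2 ∧
       (∏ i, x i) ^ ((1 : ℝ) / n) = (n : ℝ) ^ (-(1 : ℝ) / n) ∧
       (n : ℝ) / (∑ i, (x i)⁻¹) = n / (2 * n - 1))) ∧
    Tendsto (fun n : ℕ =>
        ((1 - 1 / (n : ℝ) + 1 / (n : ℝ) ^ 2) - (n : ℝ) ^ (-(1 : ℝ) / n)) /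
          ((n : ℝ) / (2 * n - 1) - (n : ℝ) ^ (-(1 : ℝ) / n)))
      atTop (nhds 0) := by
  constructor
  · intro n hn
    intro x
    obtain ⟨m, rfl⟩ : ∃ m, n = m + 2 := ⟨n - 2, by omega⟩
    have hpos : (0 : ℝ) < (m + 2 : ℕ) := by positivity
    have hne : ((m + 2 : ℕ) : ℝ) ≠ 0 := hpos.ne'
    have hsum : (∑ i, x i) = (m + 1 : ℕ) + 1 / ((m + 2 : ℕ) : ℝ) := by
      rw [Fin.sum_univ_eq_sum_range (fun i => if i < (m + 2) - 1 then (1 : ℝ)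
        else 1 / ((m + 2 : ℕ) : ℝ))]
      rw [show m + 2 = (m + 1) + 1 from rfl, Finset.sum_range_succ]
      have h1 : ∀ i ∈ Finset.range (m + 1),
          (if i < (m + 1 + 1) - 1 then (1 : ℝ) else 1 / ((m + 2 : ℕ) : ℝ)) = 1 := by
        intro i hi
        simp only [Finset.mem_range] at hi
        simp [Nat.lt_succ_iff, hi.le, hi]
      rw [Finset.sum_congr rfl h1]
      simp
    have hprod : (∏ i, x i) = 1 / ((m + 2 : ℕ) : ℝ) := by
      rw [Fin.prod_univ_eq_prod_range (fun i => if i < (m + 2) - 1 then (1 : ℝ)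
        else 1 / ((m + 2 : ℕ) : ℝ))]
      rw [show m + 2 = (m + 1) + 1 from rfl, Finset.prod_range_succ]
      have h1 : ∀ i ∈ Finset.range (m + 1),
          (if i < (m + 1 + 1) - 1 then (1 : ℝ) else 1 / ((m + 2 : ℕ) : ℝ)) = 1 := by
        intro i hi
        simp only [Finset.mem_range] at hi
        simp [hi]
      rw [Finset.prod_congr rfl h1]
      simp
    have hsuminv : (∑ i, (x i)⁻¹) = (m + 1 : ℕ) + ((m + 2 : ℕ) : ℝ) := by
      rw [Fin.sum_univ_eq_sum_range (fun i => (if i < (m + 2) - 1 then (1 : ℝ)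
        else 1 / ((m + 2 : ℕ) : ℝ))⁻¹)]
      rw [show m + 2 = (m + 1) + 1 from rfl, Finset.sum_range_succ]
      have h1 : ∀ i ∈ Finset.range (m + 1),
          (if i < (m + 1 + 1) - 1 then (1 : ℝ) else 1 / ((m + 2 : ℕ) : ℝ))⁻¹ = 1 := by
        intro i hi
        simp only [Finset.mem_range] at hi
        simp [hi]
      rw [Finset.sum_congr rfl h1]
      simp
    refine ⟨?_, ?_, ?_⟩
    · rw [hsum]
      push_cast
      field_simp
      ring
    · rw [hprod, one_div, Real.inv_rpow hpos.le, ← Real.rpow_neg hpos.le, neg_div, one_div]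
    · rw [hsuminv]
      push_cast
      ring_nf
  · have hg : Tendsto (fun n : ℕ => ((n : ℝ)) ^ (-(1 : ℝ) / n)) atTop (nhds 1) :=
      tendsto_rpow_neg_div.comp tendsto_natCast_atTop_atTop
    have ha : Tendsto (fun n : ℕ => 1 - 1 / (n : ℝ) + 1 / (n : ℝ) ^ 2) atTop (nhds 1) := by
      have h1 := tendsto_one_div_atTop_nhds_zero_nat (𝕜 := ℝ)
      have h2 : Tendsto (fun n : ℕ => 1 / (n : ℝ) ^ 2) atTop (nhds 0) := by
        simpa [sq] using h1.mul h1
      have := ((tendsto_const_nhds (x := (1 : ℝ)) (f := atTop)).sub h1).add h2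
      simpa using this
    have hh : Tendsto (fun n : ℕ => (n : ℝ) / (2 * n - 1)) atTop (nhds (1 / 2)) := by
      have h1 := tendsto_one_div_atTop_nhds_zero_nat (𝕜 := ℝ)
      have hden : Tendsto (fun n : ℕ => 2 - 1 / (n : ℝ)) atTop (nhds 2) := by
        simpa using (tendsto_const_nhds (x := (2 : ℝ)) (f := atTop)).sub h1
      have := (tendsto_const_nhds (x := (1 : ℝ)) (f := atTop)).div hden (by norm_num)
      refine this.congr' ?_
      filter_upwards [eventually_ge_atTop 1] with n hn
      have hn0 : (n : ℝ) ≠ 0 := by positivity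
      simp only [Pi.div_apply]
      field_simp
    have hnum := ha.sub hg
    have hden := hh.sub hg
    have hlim : (1 : ℝ) / 2 - 1 ≠ 0 := by norm_num
    have := (hnum.div hden hlim)
    norm_num at this
    convert this using 2
    norm_num
end
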